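/- arXiv:2304.01787 — 5 statements merged into one kernel-verified Lean document; each statement's English description precedes it below -/
import Mathlib

section
/- Let G be a finite abelian group and let k, r be integers with k ≥ 3, 2k ≤ r, r ≥ 2^k·k², and r^k ≤ |G| ≤ 2·r^k. Then for every ε ∈ (0,1] and every event E ⊆ G^r: if D1(E) ≥ ε, then D0(E) ≥ ε^{3/2}/(21·k^k). In particular, any deterministic solver that outputs a k-SUM solution with probability at least ε on an instance drawn from the planted distribution D1 also outputs a k-SUM solution with probability at least ε^{3/2}/(21·k^k) on an instance drawn from the uniform distribution D0. -/
open Finset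

/-- Number of k-SUM solutions of an instance `X ∈ G^r`: the number of `k`-element
subsets `S ⊆ {1,…,r}` with `∑_{i∈S} X i = 0`. -/
def numSol {G : Type} [AddCommGroup G] [DecidableEq G] (k : ℕ) {r : ℕ} (X : Fin r → G) : ℕ :=
  (((univ : Finset (Fin r)).powersetCard k).filter (fun S => ∑ i ∈ S, X i = 0)).card

/-- Plant a solution at `S`: replace the entry at the smallest index `i` of `S` by
`-∑_{j∈S, j≠i} Y j`. -/
def plant {G : Type} [AddCommGroup G] {r : ℕ} (Y : Fin r → G) (S : Finset (Fin r)) :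
    Fin r → G :=
  fun j =>
    if hS : S.Nonempty then
      if j = S.min' hS then -∑ i ∈ S.erase (S.min' hS), Y i else Y j
    else Y j

/-- Probability of an event `E` under the uniform distribution `D0` on `G^r`. -/
noncomputable def D0prob (G : Type) [Fintype G] {r : ℕ} (E : Finset (Fin r → G)) : ℝ :=
  (E.card : ℝ) / (Fintype.card G : ℝ) ^ r

/-- The probability mass function of the planted distribution `D1` on `G^r`:
draw `Y` uniformly from `G^r` and an independent uniformly random `k`-element
subset `S`, and output `plant Y S`. -/
noncomputable def D1pmf {G : Type} [AddCommGroup G] [Fintype G] [DecidableEq G] (k : ℕ)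
    {r : ℕ} (X : Fin r → G) : ℝ :=
  (((univ : Finset ((Fin r → G) × Finset (Fin r))).filter
      (fun p => p.2.card = k ∧ plant p.1 p.2 = X)).card : ℝ)
    / ((Fintype.card G : ℝ) ^ r * (r.choose k : ℝ))

/-- Probability of an event `E` under the planted distribution `D1`. -/
noncomputable def D1prob {G : Type} [AddCommGroup G] [Fintype G] [DecidableEq G] (k : ℕ)
    {r : ℕ} (E : Finset (Fin r → G)) : ℝ :=
  ∑ X ∈ E, D1pmf k X

section AuxProof
variable {G : Type} [AddCommGroup G] [Fintype G] [DecidableEq G] {r : ℕ}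

lemma card_vanish (I : Finset (Fin r)) :
    ((univ : Finset (Fin r → G)).filter (fun Y => ∀ j ∈ I, Y j = 0)).card
      = Fintype.card G ^ (r - I.card) := by
  classical
  set ext : ({x : Fin r // x ∉ I} → G) → (Fin r → G) :=
    fun f j => if h : j ∈ I then 0 else f ⟨j, h⟩ with hext
  have hinj : Function.Injective ext := by
    intro f g h
    funext x
    have := congrFun h x.1
    simpa [hext, dif_neg x.2] using this
  have himg : (univ : Finset ({x : Fin r // x ∉ I} → G)).image ext
      = (univ : Finset (Fin r → G)).filter (fun Y => ∀ j ∈ I, Y j = 0) := by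
    ext Y
    simp only [mem_image, mem_univ, true_and, mem_filter]
    constructor
    · rintro ⟨f, rfl⟩ j hj; simp [hext, dif_pos hj]
    · intro hY
      refine ⟨fun x => Y x.1, ?_⟩
      funext j
      by_cases h : j ∈ I
      · simp [hext, dif_pos h, (hY j h).symm]
      · simp [hext, dif_neg h]
  have hcard : Fintype.card {x : Fin r // x ∉ I} = r - I.card := by
    have := Fintype.card_subtype_compl (fun x : Fin r => x ∈ I)
    simpa [Fintype.card_coe] using this
  rw [← himg, Finset.card_image_of_injective _ hinj, card_univ, Fintype.card_fun, hcard]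

lemma card_le_of_determined (I : Finset (Fin r)) (A : Finset (Fin r → G))
    (h : ∀ X ∈ A, ∀ Y ∈ A, (∀ j, j ∉ I → X j = Y j) → X = Y) :
    A.card ≤ Fintype.card G ^ (r - I.card) := by
  classical
  have hle : A.card ≤ ((univ : Finset (Fin r → G)).filter (fun Y => ∀ j ∈ I, Y j = 0)).card := by
    apply Finset.card_le_card_of_injOn (fun X j => if j ∈ I then (0:G) else X j)
    · intro X _
      simp only [Finset.mem_coe, mem_filter, mem_univ, true_and]
      intro j hj
      rw [if_pos hj]
    · intro X hX Y hY hXY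
      refine h X hX Y hY fun j hj => ?_
      have := congrFun hXY j
      simpa [if_neg hj] using this
  rwa [card_vanish] at hle


lemma card_le_one_zero (A : Finset (Fin r → G)) (S : Finset (Fin r)) (hS : S.Nonempty)
    (hA : ∀ X ∈ A, ∑ i ∈ S, X i = 0) : A.card ≤ Fintype.card G ^ (r - 1) := by
  obtain ⟨i, hi⟩ := hS
  have key : ∀ Z ∈ A, Z i = -∑ m ∈ S.erase i, Z m := by
    intro Z hZ
    have h0 := hA Z hZ
    rw [← Finset.add_sum_erase _ _ hi, add_eq_zero_iff_eq_neg] at h0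
    exact h0
  have := card_le_of_determined {i} A ?_
  · simpa using this
  intro X hX Y hY hagree
  funext j
  by_cases hj : j = i
  · subst hj
    rw [key X hX, key Y hY]
    congr 1
    refine Finset.sum_congr rfl fun m hm => hagree m ?_
    simp [(Finset.mem_erase.1 hm).1]
  · exact hagree j (by simp [hj])

lemma card_le_two_zero (A : Finset (Fin r → G)) (S T : Finset (Fin r)) (hST : S ≠ T)
    (hcard : S.card = T.card)
    (hA : ∀ X ∈ A, ∑ i ∈ S, X i = 0 ∧ ∑ i ∈ T, X i = 0) :
    A.card ≤ Fintype.card G ^ (r - 2) := by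
  have hSsub : ¬ S ⊆ T := fun h => hST (Finset.eq_of_subset_of_card_le h (le_of_eq hcard.symm))
  have hTsub : ¬ T ⊆ S := fun h => hST (Finset.eq_of_subset_of_card_le h (le_of_eq hcard)).symm
  obtain ⟨i, hiS, hiT⟩ := Finset.not_subset.1 hSsub
  obtain ⟨j, hjT, hjS⟩ := Finset.not_subset.1 hTsub
  have hij : i ≠ j := fun h => hiT (h ▸ hjT)
  have keyS : ∀ Z ∈ A, Z i = -∑ m ∈ S.erase i, Z m := by
    intro Z hZ
    have h0 := (hA Z hZ).1
    rw [← Finset.add_sum_erase _ _ hiS, add_eq_zero_iff_eq_neg] at h0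
    exact h0
  have keyT : ∀ Z ∈ A, Z j = -∑ m ∈ T.erase j, Z m := by
    intro Z hZ
    have h0 := (hA Z hZ).2
    rw [← Finset.add_sum_erase _ _ hjT, add_eq_zero_iff_eq_neg] at h0
    exact h0
  have := card_le_of_determined {i, j} A ?_
  · have hc : ({i, j} : Finset (Fin r)).card = 2 := by
      rw [Finset.card_insert_of_notMem (by simp [hij]), Finset.card_singleton]
    rwa [hc] at this
  intro X hX Y hY hagree
  funext m
  by_cases hm : m ∈ ({i, j} : Finset (Fin r))
  · rcases Finset.mem_insert.1 hm with hm | hm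
    · subst hm
      rw [keyS X hX, keyS Y hY]
      congr 1
      refine Finset.sum_congr rfl fun m' hm' => hagree m' ?_
      have h1 := (Finset.mem_erase.1 hm').1
      have h2 : m' ∈ S := (Finset.mem_erase.1 hm').2
      simp only [Finset.mem_insert, Finset.mem_singleton]
      push_neg
      exact ⟨h1, fun h => hjS (h ▸ h2)⟩
    · rw [Finset.mem_singleton] at hm
      subst hm
      rw [keyT X hX, keyT Y hY]
      congr 1
      refine Finset.sum_congr rfl fun m' hm' => hagree m' ?_
      have h1 := (Finset.mem_erase.1 hm').1
      have h2 : m' ∈ T := (Finset.mem_erase.1 hm').2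
      simp only [Finset.mem_insert, Finset.mem_singleton]
      push_neg
      exact ⟨fun h => hiT (h ▸ h2), h1⟩
  · exact hagree m hm

/-- helper A : some l lies in S only -/
lemma card_le_three_zero_A (A : Finset (Fin r → G)) (S T U : Finset (Fin r))
    (l : Fin r) (hlS : l ∈ S) (hlT : l ∉ T) (hlU : l ∉ U)
    (hTU : T ≠ U) (hcard : T.card = U.card)
    (hA : ∀ X ∈ A, ∑ i ∈ S, X i = 0 ∧ ∑ i ∈ T, X i = 0 ∧ ∑ i ∈ U, X i = 0) :
    A.card ≤ Fintype.card G ^ (r - 3) := by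
  have hTsub : ¬ T ⊆ U := fun h => hTU (Finset.eq_of_subset_of_card_le h (le_of_eq hcard.symm))
  have hUsub : ¬ U ⊆ T := fun h => hTU (Finset.eq_of_subset_of_card_le h (le_of_eq hcard)).symm
  obtain ⟨i, hiT, hiU⟩ := Finset.not_subset.1 hTsub
  obtain ⟨j, hjU, hjT⟩ := Finset.not_subset.1 hUsub
  have hij : i ≠ j := fun h => hiU (h ▸ hjU)
  have hil : i ≠ l := fun h => hlT (h ▸ hiT)
  have hjl : j ≠ l := fun h => hlU (h ▸ hjU)
  have keyT : ∀ Z ∈ A, Z i = -∑ m ∈ T.erase i, Z m := by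
    intro Z hZ
    have h0 := (hA Z hZ).2.1
    rwa [← Finset.add_sum_erase _ _ hiT, add_eq_zero_iff_eq_neg] at h0
  have keyU : ∀ Z ∈ A, Z j = -∑ m ∈ U.erase j, Z m := by
    intro Z hZ
    have h0 := (hA Z hZ).2.2
    rwa [← Finset.add_sum_erase _ _ hjU, add_eq_zero_iff_eq_neg] at h0
  have keyS : ∀ Z ∈ A, Z l = -∑ m ∈ S.erase l, Z m := by
    intro Z hZ
    have h0 := (hA Z hZ).1
    rwa [← Finset.add_sum_erase _ _ hlS, add_eq_zero_iff_eq_neg] at h0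
  have := card_le_of_determined {i, j, l} A ?_
  · have hc : ({i, j, l} : Finset (Fin r)).card = 3 := by
      rw [Finset.card_insert_of_notMem (by simp [hij, hil]),
        Finset.card_insert_of_notMem (by simp [hjl]), Finset.card_singleton]
    rwa [hc] at this
  intro X hX Y hY hagree
  have hnotmem : ∀ m : Fin r, m ≠ i → m ≠ j → m ≠ l → m ∉ ({i, j, l} : Finset (Fin r)) := by
    intro m h1 h2 h3; simp [h1, h2, h3]
  have hXi : X i = Y i := by
    rw [keyT X hX, keyT Y hY]
    congr 1
    refine Finset.sum_congr rfl fun m hm => hagree m ?_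
    obtain ⟨h1, h2⟩ := Finset.mem_erase.1 hm
    exact hnotmem m h1 (fun h => hjT (h ▸ h2)) (fun h => hlT (h ▸ h2))
  have hXj : X j = Y j := by
    rw [keyU X hX, keyU Y hY]
    congr 1
    refine Finset.sum_congr rfl fun m hm => hagree m ?_
    obtain ⟨h1, h2⟩ := Finset.mem_erase.1 hm
    exact hnotmem m (fun h => hiU (h ▸ h2)) h1 (fun h => hlU (h ▸ h2))
  have hXl : X l = Y l := by
    rw [keyS X hX, keyS Y hY]
    congr 1
    refine Finset.sum_congr rfl fun m hm => ?_
    obtain ⟨h1, h2⟩ := Finset.mem_erase.1 hm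
    by_cases hmi : m = i
    · subst hmi; exact hXi
    by_cases hmj : m = j
    · subst hmj; exact hXj
    exact hagree m (hnotmem m hmi hmj h1)
  funext m
  by_cases hmi : m = i
  · subst hmi; exact hXi
  by_cases hmj : m = j
  · subst hmj; exact hXj
  by_cases hml : m = l
  · subst hml; exact hXl
  exact hagree m (hnotmem m hmi hmj hml)

/-- helper B : l in all three, i ∈ S∩U \ T, j ∈ T∩U \ S -/
lemma card_le_three_zero_B (A : Finset (Fin r → G)) (S T U : Finset (Fin r))
    (l i j : Fin r) (hlS : l ∈ S) (hlT : l ∈ T) (hlU : l ∈ U)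
    (hiS : i ∈ S) (hiT : i ∉ T) (hiU : i ∈ U)
    (hjT : j ∈ T) (hjS : j ∉ S) (hjU : j ∈ U)
    (hA : ∀ X ∈ A, ∑ i ∈ S, X i = 0 ∧ ∑ i ∈ T, X i = 0 ∧ ∑ i ∈ U, X i = 0) :
    A.card ≤ Fintype.card G ^ (r - 3) := by
  have hij : i ≠ j := fun h => hjS (h ▸ hiS)
  have hil : i ≠ l := fun h => hiT (h ▸ hlT)
  have hjl : j ≠ l := fun h => hjS (h ▸ hlS)
  have hlSe : l ∈ S.erase i := Finset.mem_erase.2 ⟨fun h => hil h.symm, hlS⟩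
  have hlTe : l ∈ T.erase j := Finset.mem_erase.2 ⟨fun h => hjl h.symm, hlT⟩
  have hjUe : j ∈ U.erase i := Finset.mem_erase.2 ⟨fun h => hij h.symm, hjU⟩
  have hlUe : l ∈ (U.erase i).erase j := Finset.mem_erase.2 ⟨fun h => hjl h.symm,
    Finset.mem_erase.2 ⟨fun h => hil h.symm, hlU⟩⟩
  have keyS : ∀ Z ∈ A, Z i + (Z l + ∑ m ∈ (S.erase i).erase l, Z m) = 0 := by
    intro Z hZ
    have h0 := (hA Z hZ).1
    rwa [← Finset.add_sum_erase _ _ hiS, ← Finset.add_sum_erase _ _ hlSe] at h0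
  have keyT : ∀ Z ∈ A, Z j + (Z l + ∑ m ∈ (T.erase j).erase l, Z m) = 0 := by
    intro Z hZ
    have h0 := (hA Z hZ).2.1
    rwa [← Finset.add_sum_erase _ _ hjT, ← Finset.add_sum_erase _ _ hlTe] at h0
  have keyU : ∀ Z ∈ A, Z i + (Z j + (Z l + ∑ m ∈ ((U.erase i).erase j).erase l, Z m)) = 0 := by
    intro Z hZ
    have h0 := (hA Z hZ).2.2
    rwa [← Finset.add_sum_erase _ _ hiU, ← Finset.add_sum_erase _ _ hjUe,
      ← Finset.add_sum_erase _ _ hlUe] at h0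
  have := card_le_of_determined {i, j, l} A ?_
  · have hc : ({i, j, l} : Finset (Fin r)).card = 3 := by
      rw [Finset.card_insert_of_notMem (by simp [hij, hil]),
        Finset.card_insert_of_notMem (by simp [hjl]), Finset.card_singleton]
    rwa [hc] at this
  intro X hX Y hY hagree
  have hnotmem : ∀ m : Fin r, m ≠ i → m ≠ j → m ≠ l → m ∉ ({i, j, l} : Finset (Fin r)) := by
    intro m h1 h2 h3; simp [h1, h2, h3]
  -- rest sums agree
  have hRS : ∑ m ∈ (S.erase i).erase l, X m = ∑ m ∈ (S.erase i).erase l, Y m := by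
    refine Finset.sum_congr rfl fun m hm => hagree m ?_
    obtain ⟨h1, h2⟩ := Finset.mem_erase.1 hm
    obtain ⟨h3, h4⟩ := Finset.mem_erase.1 h2
    exact hnotmem m h3 (fun h => hjS (h ▸ h4)) h1
  have hRT : ∑ m ∈ (T.erase j).erase l, X m = ∑ m ∈ (T.erase j).erase l, Y m := by
    refine Finset.sum_congr rfl fun m hm => hagree m ?_
    obtain ⟨h1, h2⟩ := Finset.mem_erase.1 hm
    obtain ⟨h3, h4⟩ := Finset.mem_erase.1 h2
    exact hnotmem m (fun h => hiT (h ▸ h4)) h3 h1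
  have hRU : ∑ m ∈ ((U.erase i).erase j).erase l, X m
      = ∑ m ∈ ((U.erase i).erase j).erase l, Y m := by
    refine Finset.sum_congr rfl fun m hm => hagree m ?_
    obtain ⟨h1, h2⟩ := Finset.mem_erase.1 hm
    obtain ⟨h3, h4⟩ := Finset.mem_erase.1 h2
    obtain ⟨h5, _⟩ := Finset.mem_erase.1 h4
    exact hnotmem m h5 h3 h1
  -- the three equations
  have eq1 : X i + X l = Y i + Y l := by
    have e1 := keyS X hX
    have e2 := keyS Y hY
    rw [hRS] at e1
    have e3 : X i + (X l + ∑ m ∈ (S.erase i).erase l, Y m)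
        = Y i + (Y l + ∑ m ∈ (S.erase i).erase l, Y m) := e1.trans e2.symm
    rw [← add_assoc, ← add_assoc] at e3
    exact add_right_cancel e3
  have eq2 : X j + X l = Y j + Y l := by
    have e1 := keyT X hX
    have e2 := keyT Y hY
    rw [hRT] at e1
    have e3 : X j + (X l + ∑ m ∈ (T.erase j).erase l, Y m)
        = Y j + (Y l + ∑ m ∈ (T.erase j).erase l, Y m) := e1.trans e2.symm
    rw [← add_assoc, ← add_assoc] at e3
    exact add_right_cancel e3
  have eq3 : X i + X j + X l = Y i + Y j + Y l := by
    have e1 := keyU X hX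
    have e2 := keyU Y hY
    rw [hRU] at e1
    have e3 : X i + X j + X l + ∑ m ∈ ((U.erase i).erase j).erase l, Y m
        = Y i + Y j + Y l + ∑ m ∈ ((U.erase i).erase j).erase l, Y m := by
      have l1 : X i + (X j + (X l + ∑ m ∈ ((U.erase i).erase j).erase l, Y m))
          = X i + X j + X l + ∑ m ∈ ((U.erase i).erase j).erase l, Y m := by abel
      have l2 : Y i + (Y j + (Y l + ∑ m ∈ ((U.erase i).erase j).erase l, Y m))
          = Y i + Y j + Y l + ∑ m ∈ ((U.erase i).erase j).erase l, Y m := by abel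
      rw [← l1, ← l2]
      exact e1.trans e2.symm
    exact add_right_cancel e3
  have hXj : X j = Y j := by
    have h5 : X j + (X i + X l) = Y j + (Y i + Y l) := by
      calc X j + (X i + X l) = X i + X j + X l := by abel
        _ = Y i + Y j + Y l := eq3
        _ = Y j + (Y i + Y l) := by abel
    rw [eq1] at h5
    exact add_right_cancel h5
  have hXi : X i = Y i := by
    have h5 : X i + (X j + X l) = Y i + (Y j + Y l) := by
      calc X i + (X j + X l) = X i + X j + X l := by abel
        _ = Y i + Y j + Y l := eq3
        _ = Y i + (Y j + Y l) := by abel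
    rw [eq2] at h5
    exact add_right_cancel h5
  have hXl : X l = Y l := by
    rw [hXi] at eq1
    exact add_left_cancel eq1
  funext m
  by_cases hmi : m = i
  · subst hmi; exact hXi
  by_cases hmj : m = j
  · subst hmj; exact hXj
  by_cases hml : m = l
  · subst hml; exact hXl
  exact hagree m (hnotmem m hmi hmj hml)

/-- membership count of x in the triple (S,T,U) -/
def mem3 (S T U : Finset (Fin r)) (x : Fin r) : ℕ :=
  (if x ∈ S then 1 else 0) + (if x ∈ T then 1 else 0) + (if x ∈ U then 1 else 0)

lemma deg_unique {S T U U' : Finset (Fin r)} (h1 : ∀ x, mem3 S T U x % 2 = 0)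
    (h2 : ∀ x, mem3 S T U' x % 2 = 0) : U = U' := by
  ext x
  have a := h1 x
  have b := h2 x
  unfold mem3 at a b
  by_cases hS : x ∈ S <;> by_cases hT : x ∈ T <;> by_cases hU : x ∈ U <;>
    by_cases hU' : x ∈ U' <;> simp [hS, hT, hU, hU'] at a b ⊢ <;> omega

lemma not_deg_cases {S T U : Finset (Fin r)} (h : ¬ ∀ x, mem3 S T U x % 2 = 0) :
    ∃ x, mem3 S T U x = 1 ∨ mem3 S T U x = 3 := by
  push_neg at h
  obtain ⟨x, hx⟩ := h
  refine ⟨x, ?_⟩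
  have : mem3 S T U x ≤ 3 := by
    unfold mem3
    by_cases hS : x ∈ S <;> by_cases hT : x ∈ T <;> by_cases hU : x ∈ U <;>
      simp [hS, hT, hU]
  omega

lemma card_le_three_zero (A : Finset (Fin r → G)) (S T U : Finset (Fin r))
    (hST : S ≠ T) (hSU : S ≠ U) (hTU : T ≠ U)
    (hc1 : S.card = T.card) (hc2 : T.card = U.card)
    (hdeg : ¬ ∀ x, mem3 S T U x % 2 = 0)
    (hA : ∀ X ∈ A, ∑ i ∈ S, X i = 0 ∧ ∑ i ∈ T, X i = 0 ∧ ∑ i ∈ U, X i = 0) :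
    A.card ≤ Fintype.card G ^ (r - 3) := by
  by_cases hone : ∃ x, mem3 S T U x = 1
  · obtain ⟨l, hl⟩ := hone
    unfold mem3 at hl
    by_cases hlS : l ∈ S <;> by_cases hlT : l ∈ T <;> by_cases hlU : l ∈ U <;>
      simp [hlS, hlT, hlU] at hl
    · exact card_le_three_zero_A A S T U l hlS hlT hlU hTU hc2 hA
    · exact card_le_three_zero_A A T S U l hlT hlS hlU hSU (hc1 ▸ hc2)
        (fun X hX => ⟨(hA X hX).2.1, (hA X hX).1, (hA X hX).2.2⟩)
    · exact card_le_three_zero_A A U S T l hlU hlS hlT hST hc1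
        (fun X hX => ⟨(hA X hX).2.2, (hA X hX).1, (hA X hX).2.1⟩)
  · obtain ⟨l, hl⟩ := not_deg_cases hdeg
    have hl3 : mem3 S T U l = 3 := by
      rcases hl with h | h
      · exact absurd ⟨l, h⟩ hone
      · exact h
    have hlmem : l ∈ S ∧ l ∈ T ∧ l ∈ U := by
      unfold mem3 at hl3
      by_cases hlS : l ∈ S <;> by_cases hlT : l ∈ T <;> by_cases hlU : l ∈ U <;>
        simp [hlS, hlT, hlU] at hl3 ⊢
    have hSsub : ¬ S ⊆ T := fun h => hST (Finset.eq_of_subset_of_card_le h (le_of_eq hc1.symm))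
    have hTsub : ¬ T ⊆ S := fun h => hST (Finset.eq_of_subset_of_card_le h (le_of_eq hc1)).symm
    obtain ⟨i, hiS, hiT⟩ := Finset.not_subset.1 hSsub
    obtain ⟨j, hjT, hjS⟩ := Finset.not_subset.1 hTsub
    have hiU : i ∈ U := by
      by_contra hiU
      exact hone ⟨i, by unfold mem3; simp [hiS, hiT, hiU]⟩
    have hjU : j ∈ U := by
      by_contra hjU
      exact hone ⟨j, by unfold mem3; simp [hjS, hjT, hjU]⟩
    exact card_le_three_zero_B A S T U l i j hlmem.1 hlmem.2.1 hlmem.2.2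
      hiS hiT hiU hjT hjS hjU hA

lemma M3_bound (k : ℕ) (hk : 1 ≤ k) :
    ∑ X : Fin r → G, (numSol k X) ^ 3 ≤
      r.choose k * Fintype.card G ^ (r - 1)
        + 4 * (r.choose k) ^ 2 * Fintype.card G ^ (r - 2)
        + (r.choose k) ^ 3 * Fintype.card G ^ (r - 3) := by
  classical
  set K : Finset (Finset (Fin r)) := (univ : Finset (Fin r)).powersetCard k with hK
  have hKcard : K.card = r.choose k := by
    rw [hK, Finset.card_powersetCard, Finset.card_univ, Fintype.card_fin]
  have hKmem : ∀ S ∈ K, S.card = k := fun S hS => (Finset.mem_powersetCard_univ.1 hS)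
  have hKne : ∀ S ∈ K, S.Nonempty := by
    intro S hS
    rw [← Finset.card_pos, hKmem S hS]; omega
  set N : Finset (Fin r) × Finset (Fin r) × Finset (Fin r) → ℕ := fun p =>
    ((univ : Finset (Fin r → G)).filter fun X =>
      (∑ i ∈ p.1, X i = 0) ∧ (∑ i ∈ p.2.1, X i = 0) ∧ (∑ i ∈ p.2.2, X i = 0)).card with hN
  -- step 1 : rewrite as a sum over triples
  have hswap : ∑ X : Fin r → G, (numSol k X) ^ 3 = ∑ p ∈ K ×ˢ K ×ˢ K, N p := by
    have hcube : ∀ X : Fin r → G, (numSol k X) ^ 3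
        = ∑ S ∈ K, ∑ T ∈ K, ∑ U ∈ K,
            (if (∑ i ∈ S, X i = 0) ∧ (∑ i ∈ T, X i = 0) ∧ (∑ i ∈ U, X i = 0)
              then 1 else 0) := by
      intro X
      have h1 : numSol k X = ∑ S ∈ K, (if ∑ i ∈ S, X i = 0 then 1 else 0) := by
        rw [numSol, Finset.card_filter]
      rw [h1]
      have h2 : (∑ S ∈ K, (if ∑ i ∈ S, X i = 0 then 1 else 0)) ^ 3
          = (∑ S ∈ K, (if ∑ i ∈ S, X i = 0 then 1 else 0)) *
            ((∑ T ∈ K, (if ∑ i ∈ T, X i = 0 then 1 else 0)) *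
              (∑ U ∈ K, (if ∑ i ∈ U, X i = 0 then 1 else 0))) := by ring
      rw [h2, Finset.sum_mul_sum]
      rw [Finset.sum_mul]
      refine Finset.sum_congr rfl fun S _ => ?_
      rw [Finset.mul_sum]
      refine Finset.sum_congr rfl fun T _ => ?_
      rw [Finset.mul_sum]
      refine Finset.sum_congr rfl fun U _ => ?_
      by_cases hS : ∑ i ∈ S, X i = 0 <;> by_cases hT : ∑ i ∈ T, X i = 0 <;>
        by_cases hU : ∑ i ∈ U, X i = 0 <;> simp [hS, hT, hU]
    simp_rw [hcube]
    rw [Finset.sum_comm]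
    rw [Finset.sum_product]
    refine Finset.sum_congr rfl fun S _ => ?_
    rw [Finset.sum_comm]
    rw [Finset.sum_product]
    refine Finset.sum_congr rfl fun T _ => ?_
    rw [Finset.sum_comm]
    refine Finset.sum_congr rfl fun U _ => ?_
    exact (Finset.card_filter _ _).symm
  rw [hswap]
  set Q := K ×ˢ K ×ˢ K with hQ
  set Peq : Finset (Fin r) × Finset (Fin r) × Finset (Fin r) → Prop := fun p =>
    p.1 = p.2.1 ∧ p.2.1 = p.2.2 with hPeq
  set Pgood : Finset (Fin r) × Finset (Fin r) × Finset (Fin r) → Prop := fun p =>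
    (p.1 ≠ p.2.1 ∧ p.1 ≠ p.2.2 ∧ p.2.1 ≠ p.2.2) ∧
      ¬ ∀ x, mem3 p.1 p.2.1 p.2.2 x % 2 = 0 with hPgood
  have hsplit1 := Finset.sum_filter_add_sum_filter_not Q Peq N
  have hsplit2 := Finset.sum_filter_add_sum_filter_not (Q.filter fun p => ¬ Peq p) Pgood N
  -- bound 1 : diagonal
  have hb1 : ∑ p ∈ Q.filter Peq, N p ≤ r.choose k * Fintype.card G ^ (r - 1) := by
    have hcard1 : (Q.filter Peq).card ≤ r.choose k := by
      rw [← hKcard]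
      apply Finset.card_le_card_of_injOn (fun p => p.1)
      · intro p hp
        rw [Finset.mem_coe, Finset.mem_filter, hQ] at hp
        simp only [Finset.mem_product] at hp
        exact hp.1.1
      · intro p hp q hq h
        simp only [Finset.coe_filter, Set.mem_setOf_eq] at hp hq
        obtain ⟨-, hp1, hp2⟩ := hp
        obtain ⟨-, hq1, hq2⟩ := hq
        have h : p.1 = q.1 := h
        have h2 : p.2.1 = q.2.1 := by rw [← hp1, ← hq1, h]
        have h3 : p.2.2 = q.2.2 := by rw [← hp2, ← hq2, h2]
        exact Prod.ext h (Prod.ext h2 h3)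
    calc ∑ p ∈ Q.filter Peq, N p ≤ (Q.filter Peq).card * Fintype.card G ^ (r - 1) := by
          rw [← smul_eq_mul]
          apply Finset.sum_le_card_nsmul
          intro p hp
          rw [Finset.mem_filter, hQ] at hp
          simp only [Finset.mem_product] at hp
          apply card_le_one_zero _ p.1 (hKne p.1 hp.1.1)
          intro X hX
          exact (Finset.mem_filter.1 hX).2.1
      _ ≤ r.choose k * Fintype.card G ^ (r - 1) :=
          Nat.mul_le_mul_right _ hcard1
  -- bound 3 : good triples
  have hb3 : ∑ p ∈ (Q.filter fun p => ¬ Peq p).filter Pgood, N p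
      ≤ (r.choose k) ^ 3 * Fintype.card G ^ (r - 3) := by
    have hcard3 : ((Q.filter fun p => ¬ Peq p).filter Pgood).card ≤ (r.choose k) ^ 3 := by
      calc ((Q.filter fun p => ¬ Peq p).filter Pgood).card
          ≤ (Q.filter fun p => ¬ Peq p).card := Finset.card_filter_le _ _
        _ ≤ Q.card := Finset.card_filter_le _ _
        _ = (r.choose k) ^ 3 := by
            rw [hQ, Finset.card_product, Finset.card_product, hKcard]; ring
    calc ∑ p ∈ (Q.filter fun p => ¬ Peq p).filter Pgood, N p
        ≤ ((Q.filter fun p => ¬ Peq p).filter Pgood).card * Fintype.card G ^ (r - 3) := by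
          rw [← smul_eq_mul]
          apply Finset.sum_le_card_nsmul
          intro p hp
          rw [Finset.mem_filter] at hp
          obtain ⟨hp1, hgood⟩ := hp
          rw [Finset.mem_filter] at hp1
          obtain ⟨hpQ, -⟩ := hp1
          rw [hQ] at hpQ
          simp only [Finset.mem_product] at hpQ
          obtain ⟨h1, hgood2⟩ := hgood
          apply card_le_three_zero _ p.1 p.2.1 p.2.2 h1.1 h1.2.1 h1.2.2
            ((hKmem _ hpQ.1).trans (hKmem _ hpQ.2.1).symm)
            ((hKmem _ hpQ.2.1).trans (hKmem _ hpQ.2.2).symm) hgood2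
          intro X hX
          exact (Finset.mem_filter.1 hX).2
      _ ≤ (r.choose k) ^ 3 * Fintype.card G ^ (r - 3) := Nat.mul_le_mul_right _ hcard3
  -- bound 2 : bad triples
  have hb2 : ∑ p ∈ (Q.filter fun p => ¬ Peq p).filter (fun p => ¬ Pgood p), N p
      ≤ 4 * (r.choose k) ^ 2 * Fintype.card G ^ (r - 2) := by
    have hNle : ∀ p ∈ (Q.filter fun p => ¬ Peq p).filter (fun p => ¬ Pgood p),
        N p ≤ Fintype.card G ^ (r - 2) := by
      intro p hp
      rw [Finset.mem_filter, Finset.mem_filter] at hp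
      obtain ⟨⟨hpQ, hne⟩, -⟩ := hp
      rw [hQ] at hpQ
      simp only [Finset.mem_product] at hpQ
      simp only [hPeq, not_and] at hne
      by_cases h12 : p.1 = p.2.1
      · have h23 : p.2.1 ≠ p.2.2 := hne h12
        apply card_le_two_zero _ p.2.1 p.2.2 h23
          ((hKmem _ hpQ.2.1).trans (hKmem _ hpQ.2.2).symm)
        intro X hX
        exact ⟨(Finset.mem_filter.1 hX).2.2.1, (Finset.mem_filter.1 hX).2.2.2⟩
      · apply card_le_two_zero _ p.1 p.2.1 h12
          ((hKmem _ hpQ.1).trans (hKmem _ hpQ.2.1).symm)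
        intro X hX
        exact ⟨(Finset.mem_filter.1 hX).2.1, (Finset.mem_filter.1 hX).2.2.1⟩
    have hsub : (Q.filter fun p => ¬ Peq p).filter (fun p => ¬ Pgood p) ⊆
        ((Q.filter fun p => p.1 = p.2.1) ∪ (Q.filter fun p => p.1 = p.2.2)) ∪
        ((Q.filter fun p => p.2.1 = p.2.2) ∪
          (Q.filter fun p => ∀ x, mem3 p.1 p.2.1 p.2.2 x % 2 = 0)) := by
      intro p hp
      rw [Finset.mem_filter, Finset.mem_filter] at hp
      obtain ⟨⟨hpQ, -⟩, hng⟩ := hp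
      simp only [hPgood, not_and, not_not] at hng
      simp only [Finset.mem_union, Finset.mem_filter]
      by_cases h1 : p.1 = p.2.1
      · exact Or.inl (Or.inl ⟨hpQ, h1⟩)
      by_cases h2 : p.1 = p.2.2
      · exact Or.inl (Or.inr ⟨hpQ, h2⟩)
      by_cases h3 : p.2.1 = p.2.2
      · exact Or.inr (Or.inl ⟨hpQ, h3⟩)
      · exact Or.inr (Or.inr ⟨hpQ, hng ⟨h1, h2, h3⟩⟩)
    have hcc : ∀ (f : Finset (Fin r) × Finset (Fin r) × Finset (Fin r)
          → Finset (Fin r) × Finset (Fin r))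
        (P : Finset (Fin r) × Finset (Fin r) × Finset (Fin r) → Prop) [DecidablePred P],
        (∀ p q, P p → P q → p ∈ Q → q ∈ Q → f p = f q → p = q) →
        (∀ p, f p = (p.1, p.2.1) ∨ f p = (p.1, p.2.2) ∨ f p = (p.2.1, p.2.2)) →
        (Q.filter P).card ≤ r.choose k * r.choose k := by
      intro f P _ hinj hproj
      have : (Q.filter P).card ≤ (K ×ˢ K).card := by
        apply Finset.card_le_card_of_injOn f
        · intro p hp
          rw [Finset.mem_coe, Finset.mem_filter] at hp
          obtain ⟨hpQ, -⟩ := hp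
          rw [hQ] at hpQ
          simp only [Finset.mem_product] at hpQ
          rcases hproj p with h | h | h <;> rw [h, Finset.mem_coe, Finset.mem_product] <;>
            exact ⟨by simp [hpQ.1, hpQ.2.1, hpQ.2.2], by simp [hpQ.1, hpQ.2.1, hpQ.2.2]⟩
        · intro p hp q hq h
          simp only [Finset.coe_filter, Set.mem_setOf_eq] at hp hq
          exact hinj p q hp.2 hq.2 hp.1 hq.1 h
      rwa [Finset.card_product, hKcard] at this
    have hc1 : (Q.filter fun p => p.1 = p.2.1).card ≤ r.choose k * r.choose k := by
      apply hcc (fun p => (p.1, p.2.2)) _ ?_ (fun p => Or.inr (Or.inl rfl))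
      intro p q hP hQ' _ _ h
      have h' : (p.1, p.2.2) = (q.1, q.2.2) := h
      have h1 : p.1 = q.1 := (Prod.ext_iff.1 h').1
      have h2 : p.2.2 = q.2.2 := (Prod.ext_iff.1 h').2
      have h3 : p.2.1 = q.2.1 := by rw [← hP, ← hQ', h1]
      exact Prod.ext h1 (Prod.ext h3 h2)
    have hc2 : (Q.filter fun p => p.1 = p.2.2).card ≤ r.choose k * r.choose k := by
      apply hcc (fun p => (p.1, p.2.1)) _ ?_ (fun p => Or.inl rfl)
      intro p q hP hQ' _ _ h
      have h' : (p.1, p.2.1) = (q.1, q.2.1) := h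
      have h1 : p.1 = q.1 := (Prod.ext_iff.1 h').1
      have h2 : p.2.1 = q.2.1 := (Prod.ext_iff.1 h').2
      have h3 : p.2.2 = q.2.2 := by rw [← hP, ← hQ', h1]
      exact Prod.ext h1 (Prod.ext h2 h3)
    have hc3 : (Q.filter fun p => p.2.1 = p.2.2).card ≤ r.choose k * r.choose k := by
      apply hcc (fun p => (p.1, p.2.1)) _ ?_ (fun p => Or.inl rfl)
      intro p q hP hQ' _ _ h
      have h' : (p.1, p.2.1) = (q.1, q.2.1) := h
      have h1 : p.1 = q.1 := (Prod.ext_iff.1 h').1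
      have h2 : p.2.1 = q.2.1 := (Prod.ext_iff.1 h').2
      have h3 : p.2.2 = q.2.2 := by rw [← hP, ← hQ', h2]
      exact Prod.ext h1 (Prod.ext h2 h3)
    have hc4 : (Q.filter fun p => ∀ x, mem3 p.1 p.2.1 p.2.2 x % 2 = 0).card
        ≤ r.choose k * r.choose k := by
      apply hcc (fun p => (p.1, p.2.1)) _ ?_ (fun p => Or.inl rfl)
      intro p q hP hQ' _ _ h
      have h' : (p.1, p.2.1) = (q.1, q.2.1) := h
      have h1 : p.1 = q.1 := (Prod.ext_iff.1 h').1
      have h2 : p.2.1 = q.2.1 := (Prod.ext_iff.1 h').2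
      have h3 : p.2.2 = q.2.2 := by
        apply deg_unique (S := q.1) (T := q.2.1)
        · rw [← h1, ← h2]; exact hP
        · exact hQ'
      exact Prod.ext h1 (Prod.ext h2 h3)
    have hcardbad : ((Q.filter fun p => ¬ Peq p).filter (fun p => ¬ Pgood p)).card
        ≤ 4 * (r.choose k) ^ 2 := by
      calc ((Q.filter fun p => ¬ Peq p).filter (fun p => ¬ Pgood p)).card
          ≤ _ := Finset.card_le_card hsub
        _ ≤ _ := Finset.card_union_le _ _
        _ ≤ (r.choose k * r.choose k + r.choose k * r.choose k) +
              (r.choose k * r.choose k + r.choose k * r.choose k) := by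
            apply Nat.add_le_add
            · exact (Finset.card_union_le _ _).trans (Nat.add_le_add hc1 hc2)
            · exact (Finset.card_union_le _ _).trans (Nat.add_le_add hc3 hc4)
        _ = 4 * (r.choose k) ^ 2 := by ring
    calc ∑ p ∈ (Q.filter fun p => ¬ Peq p).filter (fun p => ¬ Pgood p), N p
        ≤ ((Q.filter fun p => ¬ Peq p).filter (fun p => ¬ Pgood p)).card
            * Fintype.card G ^ (r - 2) := by
          rw [← smul_eq_mul]
          exact Finset.sum_le_card_nsmul _ _ _ hNle
      _ ≤ 4 * (r.choose k) ^ 2 * Fintype.card G ^ (r - 2) :=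
          Nat.mul_le_mul_right _ hcardbad
  calc ∑ p ∈ Q, N p
      = ∑ p ∈ Q.filter Peq, N p + (∑ p ∈ (Q.filter fun p => ¬ Peq p).filter Pgood, N p
          + ∑ p ∈ (Q.filter fun p => ¬ Peq p).filter (fun p => ¬ Pgood p), N p) := by
        rw [hsplit2, hsplit1]
    _ ≤ r.choose k * Fintype.card G ^ (r - 1) + ((r.choose k) ^ 3 * Fintype.card G ^ (r - 3)
          + 4 * (r.choose k) ^ 2 * Fintype.card G ^ (r - 2)) := by
        exact Nat.add_le_add hb1 (Nat.add_le_add hb3 hb2)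
    _ = _ := by ring

lemma fiber_card (k : ℕ) (hk : 1 ≤ k) (X : Fin r → G) (S : Finset (Fin r)) :
    ((univ : Finset (Fin r → G)).filter fun Y => S.card = k ∧ plant Y S = X).card
      = if S.card = k ∧ ∑ i ∈ S, X i = 0 then Fintype.card G else 0 := by
  classical
  by_cases hck : S.card = k
  · have hS : S.Nonempty := by rw [← Finset.card_pos, hck]; omega
    set i₀ := S.min' hS with hi₀
    have hplant : ∀ (Y : Fin r → G) (j : Fin r),
        plant Y S j = if j = i₀ then -∑ i ∈ S.erase i₀, Y i else Y j := by
      intro Y j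
      simp only [plant, dif_pos hS, hi₀]
    by_cases hsum : ∑ i ∈ S, X i = 0
    · rw [if_pos ⟨hck, hsum⟩]
      have hXi₀ : -∑ i ∈ S.erase i₀, X i = X i₀ := by
        rw [← Finset.add_sum_erase S X (Finset.min'_mem S hS), ← hi₀] at hsum
        exact neg_eq_of_add_eq_zero_left hsum
      have himg : (univ : Finset (Fin r → G)).filter (fun Y => S.card = k ∧ plant Y S = X)
          = Finset.image (fun g : G => Function.update X i₀ g) univ := by
        ext Y
        simp only [mem_filter, mem_univ, true_and, mem_image]
        constructor
        · rintro ⟨-, hY⟩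
          refine ⟨Y i₀, ?_⟩
          funext j
          by_cases hj : j = i₀
          · subst hj; rw [Function.update_self]
          · rw [Function.update_of_ne hj]
            have := congrFun hY j
            rw [hplant, if_neg hj] at this
            exact this.symm
        · rintro ⟨g, rfl⟩
          refine ⟨hck, ?_⟩
          funext j
          rw [hplant]
          by_cases hj : j = i₀
          · rw [if_pos hj]
            subst hj
            have hsum' : ∑ i ∈ S.erase i₀, Function.update X i₀ g i
                = ∑ i ∈ S.erase i₀, X i :=
              Finset.sum_congr rfl fun m hm =>
                Function.update_of_ne (Finset.mem_erase.1 hm).1 _ _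
            rw [hsum', hXi₀]
          · rw [if_neg hj, Function.update_of_ne hj]
      rw [himg, Finset.card_image_of_injective _ (fun a b h => by
        simpa [Function.update_self] using congrFun h i₀), card_univ]
    · rw [if_neg (fun h => hsum h.2)]
      rw [Finset.card_eq_zero, Finset.filter_eq_empty_iff]
      rintro Y - ⟨-, hY⟩
      apply hsum
      have hXj : ∀ j, j ≠ i₀ → X j = Y j := by
        intro j hj
        have := congrFun hY j
        rw [hplant, if_neg hj] at this
        exact this.symm
      have hXi : X i₀ = -∑ i ∈ S.erase i₀, Y i := by
        have := congrFun hY i₀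
        rw [hplant, if_pos rfl] at this
        exact this.symm
      rw [← Finset.add_sum_erase S X (Finset.min'_mem S hS), ← hi₀, hXi,
        Finset.sum_congr rfl (fun m hm => hXj m (Finset.mem_erase.1 hm).1)]
      simp
  · rw [if_neg (fun h => hck h.1)]
    rw [Finset.card_eq_zero, Finset.filter_eq_empty_iff]
    rintro Y - ⟨h, -⟩
    exact hck h

lemma pairs_count (k : ℕ) (hk : 1 ≤ k) (X : Fin r → G) :
    (((univ : Finset ((Fin r → G) × Finset (Fin r)))).filter
      (fun p => p.2.card = k ∧ plant p.1 p.2 = X)).card = Fintype.card G * numSol k X := by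
  classical
  rw [Finset.card_eq_sum_card_fiberwise
    (f := fun p : (Fin r → G) × Finset (Fin r) => p.2)
    (t := (univ : Finset (Finset (Fin r)))) (fun x _ => mem_univ _)]
  have hfib : ∀ S : Finset (Fin r),
      ((((univ : Finset ((Fin r → G) × Finset (Fin r)))).filter
        (fun p => p.2.card = k ∧ plant p.1 p.2 = X)).filter (fun p => p.2 = S)).card
      = ((univ : Finset (Fin r → G)).filter fun Y => S.card = k ∧ plant Y S = X).card := by
    intro S
    apply Finset.card_bij (fun p _ => p.1)
    · intro p hp
      simp only [mem_filter, mem_univ, true_and] at hp ⊢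
      obtain ⟨⟨h1, h2⟩, h3⟩ := hp
      subst h3
      exact ⟨h1, h2⟩
    · intro p hp q hq h
      simp only [mem_filter, mem_univ, true_and] at hp hq
      exact Prod.ext h (hp.2.trans hq.2.symm)
    · intro Y hY
      simp only [mem_filter, mem_univ, true_and] at hY
      exact ⟨(Y, S), by simp [hY.1, hY.2], rfl⟩
  simp_rw [hfib, fiber_card k hk X]
  rw [Finset.sum_ite, Finset.sum_const, Finset.sum_const_zero, add_zero, smul_eq_mul]
  have hns : numSol k X = ((univ : Finset (Finset (Fin r))).filter
      (fun S => S.card = k ∧ ∑ i ∈ S, X i = 0)).card := by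
    rw [numSol, Finset.powersetCard_eq_filter, Finset.powerset_univ, Finset.filter_filter]
  rw [hns, mul_comm]

lemma D1pmf_eq (k : ℕ) (hk : 1 ≤ k) (X : Fin r → G) :
    D1pmf k X = (Fintype.card G : ℝ) * (numSol k X : ℝ)
      / ((Fintype.card G : ℝ) ^ r * (r.choose k : ℝ)) := by
  rw [D1pmf, pairs_count k hk X]
  push_cast
  ring

end AuxProof

set_option maxHeartbeats 2000000 in
/-- **Equivalence of planted and non-planted k-SUM at density 1.**
If `k ≥ 3`, `2k ≤ r`, `r ≥ 2^k·k²`, and `r^k ≤ |G| ≤ 2·r^k`, then for every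
`ε ∈ (0,1]` and every event `E ⊆ G^r`: if `D1(E) ≥ ε` then
`D0(E) ≥ ε^{3/2} / (21·k^k)`. -/
theorem planted_nonplanted_equivalence
    (G : Type) [AddCommGroup G] [Fintype G] [DecidableEq G]
    (k r : ℕ) (hk : 3 ≤ k) (hkr : 2 * k ≤ r) (hr : 2 ^ k * k ^ 2 ≤ r)
    (hG1 : r ^ k ≤ Fintype.card G) (hG2 : Fintype.card G ≤ 2 * r ^ k)
    (ε : ℝ) (hε0 : 0 < ε) (hε1 : ε ≤ 1)
    (E : Finset (Fin r → G)) (hE : ε ≤ D1prob k E) :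
    ε ^ ((3 : ℝ) / 2) / (21 * (k : ℝ) ^ k) ≤ D0prob G E := by
  classical
  have hk1 : 1 ≤ k := by omega
  have hkr' : k ≤ r := by omega
  have hr6 : 6 ≤ r := by omega
  set g := Fintype.card G with hg
  set C := r.choose k with hC
  have gpos : 0 < g := Fintype.card_pos
  have Cpos : 0 < C := Nat.choose_pos hkr'
  have hCg : C ≤ g := le_trans (Nat.choose_le_pow r k) hG1
  have gRpos : (0:ℝ) < (g:ℝ) := by exact_mod_cast gpos
  have CRpos : (0:ℝ) < (C:ℝ) := by exact_mod_cast Cpos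
  have gRrpos : (0:ℝ) < (g:ℝ) ^ r := pow_pos gRpos r
  have hCgR : (C:ℝ) ≤ (g:ℝ) := by exact_mod_cast hCg
  have kRpos : (0:ℝ) < (k:ℝ) := by exact_mod_cast (by omega : 0 < k)
  -- Step 1 : lower bound on the first moment from hE
  have hD1 : D1prob k E = ((g:ℝ) * ∑ X ∈ E, (numSol k X : ℝ)) / ((g:ℝ) ^ r * (C:ℝ)) := by
    rw [D1prob, Finset.sum_congr rfl (fun X _ => D1pmf_eq k hk1 X), ← Finset.sum_div,
      ← Finset.mul_sum]
  have h1 : ε * ((g:ℝ) ^ r * (C:ℝ)) ≤ (g:ℝ) * ∑ X ∈ E, (numSol k X : ℝ) := by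
    rw [hD1] at hE
    exact (le_div_iff₀ (by positivity)).1 hE
  -- Step 2 : threshold
  set t : ℝ := Real.sqrt 12 / Real.sqrt ε with ht
  have hsqε : 0 < Real.sqrt ε := Real.sqrt_pos.2 hε0
  have ht0 : 0 < t := div_pos (Real.sqrt_pos.2 (by norm_num)) hsqε
  have ht2 : t ^ 2 = 12 / ε := by
    rw [ht, div_pow, Real.sq_sqrt (by norm_num : (0:ℝ) ≤ 12), Real.sq_sqrt hε0.le]
  have h2 : ∑ X ∈ E, (numSol k X : ℝ)
      ≤ t * E.card + (∑ X : Fin r → G, (numSol k X : ℝ) ^ 3) / t ^ 2 := by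
    have hpt : ∀ X : Fin r → G, (numSol k X : ℝ) ≤ t + (numSol k X : ℝ) ^ 3 / t ^ 2 := by
      intro X
      have hc0 : (0:ℝ) ≤ (numSol k X : ℝ) := Nat.cast_nonneg _
      by_cases hct : (numSol k X : ℝ) ≤ t
      · have : (0:ℝ) ≤ (numSol k X : ℝ) ^ 3 / t ^ 2 := by positivity
        linarith
      · push_neg at hct
        have h3 : (numSol k X : ℝ) ≤ (numSol k X : ℝ) ^ 3 / t ^ 2 := by
          rw [le_div_iff₀ (by positivity)]
          have hcc : t ^ 2 ≤ (numSol k X : ℝ) ^ 2 := by nlinarith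
          calc (numSol k X : ℝ) * t ^ 2 ≤ (numSol k X : ℝ) * (numSol k X : ℝ) ^ 2 :=
              mul_le_mul_of_nonneg_left hcc hc0
            _ = (numSol k X : ℝ) ^ 3 := by ring
        linarith [ht0.le]
    calc ∑ X ∈ E, (numSol k X : ℝ) ≤ ∑ X ∈ E, (t + (numSol k X : ℝ) ^ 3 / t ^ 2) :=
        Finset.sum_le_sum fun X _ => hpt X
      _ = t * E.card + (∑ X ∈ E, (numSol k X : ℝ) ^ 3) / t ^ 2 := by
          rw [Finset.sum_add_distrib, Finset.sum_const, nsmul_eq_mul, mul_comm,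
            ← Finset.sum_div]
      _ ≤ t * E.card + (∑ X : Fin r → G, (numSol k X : ℝ) ^ 3) / t ^ 2 := by
          have hsub : (∑ X ∈ E, (numSol k X : ℝ) ^ 3)
              ≤ ∑ X : Fin r → G, (numSol k X : ℝ) ^ 3 :=
            Finset.sum_le_sum_of_subset_of_nonneg (Finset.subset_univ E)
              (fun X _ _ => by positivity)
          gcongr
  -- Step 3 : the third moment bound, in ℝ
  have hM3 : (∑ X : Fin r → G, (numSol k X : ℝ) ^ 3)
      ≤ 6 * (C:ℝ) * (g:ℝ) ^ (r - 1) := by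
    have hnat := M3_bound (G := G) (r := r) k hk1
    have hcast : (∑ X : Fin r → G, (numSol k X : ℝ) ^ 3)
        = ((∑ X : Fin r → G, (numSol k X) ^ 3 : ℕ) : ℝ) := by push_cast; rfl
    have hR : (∑ X : Fin r → G, (numSol k X : ℝ) ^ 3)
        ≤ (C:ℝ) * (g:ℝ) ^ (r-1) + 4 * (C:ℝ) ^ 2 * (g:ℝ) ^ (r-2)
          + (C:ℝ) ^ 3 * (g:ℝ) ^ (r-3) := by
      rw [hcast]
      exact_mod_cast hnat
    have e1 : (g:ℝ) ^ (r-1) = (g:ℝ) ^ (r-2) * g := by rw [← pow_succ]; congr 1; omega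
    have e2 : (g:ℝ) ^ (r-2) = (g:ℝ) ^ (r-3) * g := by rw [← pow_succ]; congr 1; omega
    have hterm2 : (C:ℝ) ^ 2 * (g:ℝ) ^ (r-2) ≤ (C:ℝ) * (g:ℝ) ^ (r-1) := by
      rw [e1]
      calc (C:ℝ) ^ 2 * (g:ℝ) ^ (r-2) = ((C:ℝ) * (g:ℝ) ^ (r-2)) * C := by ring
        _ ≤ ((C:ℝ) * (g:ℝ) ^ (r-2)) * g := by
            apply mul_le_mul_of_nonneg_left hCgR (by positivity)
        _ = (C:ℝ) * ((g:ℝ) ^ (r-2) * g) := by ring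
    have hterm3 : (C:ℝ) ^ 3 * (g:ℝ) ^ (r-3) ≤ (C:ℝ) * (g:ℝ) ^ (r-1) := by
      have hstep : (C:ℝ) ^ 3 * (g:ℝ) ^ (r-3) ≤ (C:ℝ) ^ 2 * (g:ℝ) ^ (r-2) := by
        rw [e2]
        calc (C:ℝ) ^ 3 * (g:ℝ) ^ (r-3) = ((C:ℝ) ^ 2 * (g:ℝ) ^ (r-3)) * C := by ring
          _ ≤ ((C:ℝ) ^ 2 * (g:ℝ) ^ (r-3)) * g := by
              apply mul_le_mul_of_nonneg_left hCgR (by positivity)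
          _ = (C:ℝ) ^ 2 * ((g:ℝ) ^ (r-3) * g) := by ring
      exact hstep.trans hterm2
    linarith
  -- Step 4 : combine
  have e0 : (g:ℝ) ^ r = (g:ℝ) ^ (r-1) * g := by rw [← pow_succ]; congr 1; omega
  have hP1 : ε / 2 * ((g:ℝ) ^ r * (C:ℝ)) ≤ t * ((g:ℝ) * E.card) := by
    have step1 : (g:ℝ) * ∑ X ∈ E, (numSol k X : ℝ)
        ≤ (g:ℝ) * (t * E.card + (6 * (C:ℝ) * (g:ℝ) ^ (r-1)) / t ^ 2) := by
      apply mul_le_mul_of_nonneg_left _ gRpos.le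
      calc ∑ X ∈ E, (numSol k X : ℝ)
          ≤ t * E.card + (∑ X : Fin r → G, (numSol k X : ℝ) ^ 3) / t ^ 2 := h2
        _ ≤ t * E.card + (6 * (C:ℝ) * (g:ℝ) ^ (r-1)) / t ^ 2 := by gcongr
    have step2 : (g:ℝ) * (t * E.card + (6 * (C:ℝ) * (g:ℝ) ^ (r-1)) / t ^ 2)
        = t * ((g:ℝ) * E.card) + ε / 2 * ((g:ℝ) ^ r * (C:ℝ)) := by
      rw [ht2, e0]
      field_simp
      ring
    linarith
  -- Step 5 : choose bound : 7 g ≤ 16 k^k C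
  have hP2 : 7 * (g:ℝ) ≤ 16 * ((k:ℝ) ^ k * (C:ℝ)) := by
    have hn1 : (r + 1 - k) ^ k ≤ r.descFactorial k := Nat.pow_sub_le_descFactorial r k
    have hn2 : r.descFactorial k = Nat.factorial k * C := Nat.descFactorial_eq_factorial_mul_choose r k
    have hn3 : Nat.factorial k ≤ k ^ k := Nat.factorial_le_pow k
    have hnat : (r + 1 - k) ^ k ≤ k ^ k * C := by
      calc (r + 1 - k) ^ k ≤ Nat.factorial k * C := by rw [← hn2]; exact hn1
        _ ≤ k ^ k * C := Nat.mul_le_mul_right _ hn3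
    have hA : (((r + 1 - k : ℕ) : ℝ)) ^ k ≤ (k:ℝ) ^ k * (C:ℝ) := by exact_mod_cast hnat
    have hrR : (0:ℝ) < (r:ℝ) := by exact_mod_cast (by omega : 0 < r)
    have hcastA : ((r + 1 - k : ℕ) : ℝ) = (r:ℝ) + 1 - (k:ℝ) := by
      rw [Nat.cast_sub (by omega : k ≤ r + 1)]
      push_cast
      ring
    -- Bernoulli
    have hkr8 : 8 * (k * k) ≤ r := by
      have h2k : 8 ≤ 2 ^ k :=
        le_trans (by norm_num) (Nat.pow_le_pow_right (by norm_num) hk)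
      calc 8 * (k * k) ≤ 2 ^ k * (k * k) := Nat.mul_le_mul_right _ h2k
        _ = 2 ^ k * k ^ 2 := by ring
        _ ≤ r := hr
    have hsmall : (k:ℝ) * ((k:ℝ) - 1) / (r:ℝ) ≤ 1 / 8 := by
      rw [div_le_div_iff₀ hrR (by norm_num)]
      have : (k:ℝ) * (k:ℝ) * 8 ≤ (r:ℝ) := by
        have : ((8 * (k * k) : ℕ) : ℝ) ≤ (r:ℝ) := by exact_mod_cast hkr8
        push_cast at this
        linarith
      nlinarith [kRpos]
    have hx2 : (-2:ℝ) ≤ -(((k:ℝ) - 1) / (r:ℝ)) := by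
      have hkr'' : ((k:ℝ) - 1) ≤ (r:ℝ) := by
        have : (k:ℝ) ≤ (r:ℝ) := by exact_mod_cast hkr'
        linarith
      have : ((k:ℝ) - 1) / (r:ℝ) ≤ 1 := by
        rw [div_le_one hrR]
        exact hkr''
      linarith
    have hBern := one_add_mul_le_pow hx2 k
    have hbase : 1 + -(((k:ℝ) - 1) / (r:ℝ)) = ((r:ℝ) + 1 - (k:ℝ)) / (r:ℝ) := by
      field_simp
      ring
    have hlhs : (7:ℝ) / 8 ≤ 1 + (k:ℝ) * -(((k:ℝ) - 1) / (r:ℝ)) := by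
      have : (k:ℝ) * (((k:ℝ) - 1) / (r:ℝ)) = (k:ℝ) * ((k:ℝ) - 1) / (r:ℝ) := by ring
      nlinarith [hsmall]
    have hpow : (7:ℝ) / 8 ≤ (((r:ℝ) + 1 - (k:ℝ)) / (r:ℝ)) ^ k := by
      rw [← hbase]
      exact le_trans hlhs hBern
    have hrpow : (0:ℝ) < (r:ℝ) ^ k := pow_pos hrR k
    have h7 : 7 * (r:ℝ) ^ k ≤ 8 * ((r:ℝ) + 1 - (k:ℝ)) ^ k := by
      rw [div_pow] at hpow
      have h78 : 7 / 8 * (r:ℝ) ^ k ≤ ((r:ℝ) + 1 - (k:ℝ)) ^ k := (le_div_iff₀ hrpow).1 hpow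
      linarith
    have hgle : (g:ℝ) ≤ 2 * (r:ℝ) ^ k := by exact_mod_cast hG2
    have hAk : ((r:ℝ) + 1 - (k:ℝ)) ^ k ≤ (k:ℝ) ^ k * (C:ℝ) := by
      rw [← hcastA]
      exact hA
    nlinarith [h7, hgle, hAk]
  -- Step 6 : final arithmetic
  have hP3 : Real.sqrt 12 ≤ 7 / 2 := by
    nlinarith [Real.sq_sqrt (show (0:ℝ) ≤ 12 by norm_num), Real.sqrt_nonneg 12]
  have hsεt : Real.sqrt ε * t = Real.sqrt 12 := by
    rw [ht]
    field_simp
  have hEc0 : (0:ℝ) ≤ (E.card : ℝ) := Nat.cast_nonneg _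
  have hPA : ε / 2 * ((g:ℝ) ^ r * (C:ℝ)) * Real.sqrt ε
      ≤ Real.sqrt 12 * ((g:ℝ) * E.card) := by
    calc ε / 2 * ((g:ℝ) ^ r * (C:ℝ)) * Real.sqrt ε
        ≤ (t * ((g:ℝ) * E.card)) * Real.sqrt ε := mul_le_mul_of_nonneg_right hP1 hsqε.le
      _ = (Real.sqrt ε * t) * ((g:ℝ) * E.card) := by ring
      _ = Real.sqrt 12 * ((g:ℝ) * E.card) := by rw [hsεt]
  have hgE0 : (0:ℝ) ≤ (g:ℝ) * E.card := by positivity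
  have hPB : ε * Real.sqrt ε * ((g:ℝ) ^ r) * (C:ℝ) ≤ 7 * ((g:ℝ) * E.card) := by
    have h12 : Real.sqrt 12 * ((g:ℝ) * E.card) ≤ 7 / 2 * ((g:ℝ) * E.card) :=
      mul_le_mul_of_nonneg_right hP3 hgE0
    nlinarith [hPA]
  have hPC : 7 * ((g:ℝ) * E.card) ≤ 16 * ((k:ℝ) ^ k * (C:ℝ)) * E.card := by
    calc 7 * ((g:ℝ) * E.card) = (7 * (g:ℝ)) * E.card := by ring
      _ ≤ (16 * ((k:ℝ) ^ k * (C:ℝ))) * E.card := mul_le_mul_of_nonneg_right hP2 hEc0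
      _ = 16 * ((k:ℝ) ^ k * (C:ℝ)) * E.card := by ring
  have hPD : ε * Real.sqrt ε * ((g:ℝ) ^ r) ≤ 16 * ((k:ℝ) ^ k) * E.card := by
    have hmul : (ε * Real.sqrt ε * ((g:ℝ) ^ r)) * (C:ℝ)
        ≤ (16 * ((k:ℝ) ^ k) * E.card) * (C:ℝ) := by
      calc (ε * Real.sqrt ε * ((g:ℝ) ^ r)) * (C:ℝ)
          ≤ 7 * ((g:ℝ) * E.card) := hPB
        _ ≤ 16 * ((k:ℝ) ^ k * (C:ℝ)) * E.card := hPC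
        _ = (16 * ((k:ℝ) ^ k) * E.card) * (C:ℝ) := by ring
    exact le_of_mul_le_mul_right hmul CRpos
  have hrw : ε ^ ((3:ℝ) / 2) = ε * Real.sqrt ε := by
    rw [show (3:ℝ)/2 = 1 + 1/2 by norm_num, Real.rpow_add hε0, Real.rpow_one,
      ← Real.sqrt_eq_rpow]
  rw [D0prob, hrw, div_le_div_iff₀ (by positivity) gRrpos]
  have hkE0 : (0:ℝ) ≤ (k:ℝ) ^ k * E.card := by positivity
  calc ε * Real.sqrt ε * (g:ℝ) ^ r ≤ 16 * ((k:ℝ) ^ k) * E.card := hPD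
    _ ≤ 21 * ((k:ℝ) ^ k) * E.card := by nlinarith [hkE0]
    _ = (E.card:ℝ) * (21 * (k:ℝ) ^ k) := by ring
end

section
/- Let G be a finite abelian group and 1 ≤ k ≤ r. Then Pr_{X∼D0}[c(X) ≥ 1] ≥ C(r,k)/(|G| − 1 + C(r,k)); equivalently, the probability that a uniformly random instance has no k-SUM solution satisfies Pr_{X∼D0}[c(X) = 0] ≤ (|G|−1)/(|G|−1+C(r,k)) < |G|/(|G|+C(r,k)). -/
open Finset

/-- Probability of an event under the uniform distribution `D0` on `G^r`,
where the event is given as a decidable predicate on instances. -/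
noncomputable def D0probPred (G : Type) [Fintype G] (r : ℕ)
    (P : (Fin r → G) → Prop) [DecidablePred P] : ℝ :=
  (((univ : Finset (Fin r → G)).filter P).card : ℝ) / (Fintype.card G : ℝ) ^ r

/-- Counting the kernel of a surjective hom between finite groups, as a filter card. -/
lemma card_filter_ker_aux {A B : Type} [AddCommGroup A] [Fintype A]
    [AddCommGroup B] [Fintype B]
    (φ : A →+ B) (hsurj : Function.Surjective φ)
    (p : A → Prop) [DecidablePred p] (hp : ∀ a, p a ↔ φ a = 0) :
    ((univ : Finset A).filter p).card * Fintype.card B = Fintype.card A := by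
  classical
  have h1 : Nat.card A = Nat.card (A ⧸ φ.ker) * Nat.card φ.ker :=
    AddSubgroup.card_eq_card_quotient_mul_card_addSubgroup _
  have h2 : Nat.card (A ⧸ φ.ker) = Nat.card B :=
    Nat.card_congr (QuotientAddGroup.quotientKerEquivOfSurjective φ hsurj).toEquiv
  have h3 : Nat.card φ.ker = ((univ : Finset A).filter p).card := by
    have e : {a : A // a ∈ φ.ker} ≃ {a : A // p a} :=
      Equiv.subtypeEquivRight (fun a => by simp [AddMonoidHom.mem_ker, hp])
    rw [Nat.card_congr e, Nat.card_eq_fintype_card, Fintype.card_subtype]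
  rw [h2, h3, Nat.card_eq_fintype_card, Nat.card_eq_fintype_card] at h1
  rw [mul_comm]
  exact h1.symm

/-- The number of instances making one fixed nonempty subset sum to zero. -/
lemma count_one {G : Type} [AddCommGroup G] [Fintype G] [DecidableEq G]
    {r : ℕ} (S : Finset (Fin r)) (hS : S.Nonempty) :
    ((univ : Finset (Fin r → G)).filter (fun X => ∑ i ∈ S, X i = 0)).card
      * Fintype.card G = Fintype.card G ^ r := by
  classical
  obtain ⟨i₀, hi₀⟩ := hS
  set φ : (Fin r → G) →+ G :=
    { toFun := fun X => ∑ i ∈ S, X i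
      map_zero' := by simp
      map_add' := fun X Y => by simp [Finset.sum_add_distrib] }
  have hsurj : Function.Surjective φ := by
    intro g
    refine ⟨fun j => if j = i₀ then g else 0, ?_⟩
    simp only [φ, AddMonoidHom.coe_mk, ZeroHom.coe_mk]
    rw [Finset.sum_ite_eq' S i₀ (fun _ => g)]
    simp [hi₀]
  have := card_filter_ker_aux φ hsurj (fun X => ∑ i ∈ S, X i = 0) (fun a => Iff.rfl)
  rwa [show Fintype.card (Fin r → G) = Fintype.card G ^ r by
    simp [Fintype.card_fun]] at this

/-- The number of instances making two fixed "independent" subsets sum to zero. -/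
lemma count_two {G : Type} [AddCommGroup G] [Fintype G] [DecidableEq G]
    {r : ℕ} (S T : Finset (Fin r)) {i₀ j₀ : Fin r}
    (hi₀S : i₀ ∈ S) (hi₀T : i₀ ∉ T) (hj₀T : j₀ ∈ T) (hj₀S : j₀ ∉ S) :
    ((univ : Finset (Fin r → G)).filter
        (fun X => ∑ i ∈ S, X i = 0 ∧ ∑ i ∈ T, X i = 0)).card
      * Fintype.card G ^ 2 = Fintype.card G ^ r := by
  classical
  set φ : (Fin r → G) →+ G × G :=
    { toFun := fun X => (∑ i ∈ S, X i, ∑ i ∈ T, X i)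
      map_zero' := by simp
      map_add' := fun X Y => by simp [Finset.sum_add_distrib, Prod.ext_iff] }
  have hsurj : Function.Surjective φ := by
    rintro ⟨a, b⟩
    refine ⟨fun j => (if j = i₀ then a else 0) + (if j = j₀ then b else 0), ?_⟩
    simp only [φ, AddMonoidHom.coe_mk, ZeroHom.coe_mk, Prod.mk.injEq]
    rw [Finset.sum_add_distrib, Finset.sum_add_distrib,
      Finset.sum_ite_eq' S i₀ (fun _ => a), Finset.sum_ite_eq' S j₀ (fun _ => b),
      Finset.sum_ite_eq' T i₀ (fun _ => a), Finset.sum_ite_eq' T j₀ (fun _ => b)]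
    simp [hi₀S, hi₀T, hj₀T, hj₀S]
  have := card_filter_ker_aux φ hsurj
    (fun X => ∑ i ∈ S, X i = 0 ∧ ∑ i ∈ T, X i = 0)
    (fun a => by simp [φ, Prod.ext_iff])
  rw [show Fintype.card (Fin r → G) = Fintype.card G ^ r by simp [Fintype.card_fun],
    show Fintype.card (G × G) = Fintype.card G ^ 2 by simp [Fintype.card_prod, sq]] at this
  exact this

/-- **Existence of solutions under the uniform distribution.**
`Pr_{X∼D0}[c(X) ≥ 1] ≥ C(r,k)/(|G| − 1 + C(r,k))`; equivalently,
`Pr_{X∼D0}[c(X) = 0] ≤ (|G|−1)/(|G|−1+C(r,k)) < |G|/(|G|+C(r,k))`. -/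
theorem uniform_has_solution_prob
    (G : Type) [AddCommGroup G] [Fintype G] [DecidableEq G]
    (k r : ℕ) (hk : 1 ≤ k) (hkr : k ≤ r) :
    ((r.choose k : ℝ) / ((Fintype.card G : ℝ) - 1 + (r.choose k : ℝ))
        ≤ D0probPred G r (fun X => 1 ≤ numSol k X))
    ∧ (D0probPred G r (fun X => numSol k X = 0)
        ≤ ((Fintype.card G : ℝ) - 1) / ((Fintype.card G : ℝ) - 1 + (r.choose k : ℝ)))
    ∧ (((Fintype.card G : ℝ) - 1) / ((Fintype.card G : ℝ) - 1 + (r.choose k : ℝ))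
        < (Fintype.card G : ℝ) / ((Fintype.card G : ℝ) + (r.choose k : ℝ))) := by
  classical
  set q : ℕ := Fintype.card G with hq
  set C : ℕ := r.choose k with hC
  have hq1 : 1 ≤ q := Fintype.card_pos
  have hC1 : 1 ≤ C := Nat.choose_pos hkr
  set P : Finset (Finset (Fin r)) := (univ : Finset (Fin r)).powersetCard k with hP
  have hPcard : P.card = C := by simp [hP, hC, Finset.card_powersetCard]
  have hPne : ∀ S ∈ P, S.Nonempty := by
    intro S hS
    rw [hP, Finset.mem_powersetCard_univ] at hS
    rw [← Finset.card_pos, hS]; exact hk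
  -- first moment
  have hswap : ∑ X : Fin r → G, numSol k X
      = ∑ S ∈ P, ((univ : Finset (Fin r → G)).filter (fun X => ∑ i ∈ S, X i = 0)).card := by
    unfold numSol
    simp_rw [Finset.card_filter]
    rw [Finset.sum_comm]
  have hSig1 : (∑ X : Fin r → G, numSol k X) * q = C * q ^ r := by
    rw [hswap, Finset.sum_mul]
    rw [Finset.sum_congr rfl (fun S hS => count_one S (hPne S hS))]
    simp [hPcard, mul_comm, hq]
  -- second moment
  have hsq : ∀ X : Fin r → G, numSol k X ^ 2
      = ∑ S ∈ P, ∑ T ∈ P, (if ∑ i ∈ S, X i = 0 ∧ ∑ i ∈ T, X i = 0 then 1 else 0) := by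
    intro X
    unfold numSol
    rw [sq, Finset.card_filter, Finset.sum_mul_sum]
    apply Finset.sum_congr rfl; intro S _
    apply Finset.sum_congr rfl; intro T _
    by_cases h1 : ∑ i ∈ S, X i = 0 <;> by_cases h2 : ∑ i ∈ T, X i = 0 <;> simp [h1, h2]
  have hswap2 : ∑ X : Fin r → G, numSol k X ^ 2
      = ∑ S ∈ P, ∑ T ∈ P, ((univ : Finset (Fin r → G)).filter
          (fun X => ∑ i ∈ S, X i = 0 ∧ ∑ i ∈ T, X i = 0)).card := by
    simp_rw [hsq]
    rw [Finset.sum_comm]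
    apply Finset.sum_congr rfl; intro S _
    rw [Finset.sum_comm]
    apply Finset.sum_congr rfl; intro T _
    rw [Finset.card_filter]
  have hcount : ∀ S ∈ P, ∀ T ∈ P,
      (((univ : Finset (Fin r → G)).filter
          (fun X => ∑ i ∈ S, X i = 0 ∧ ∑ i ∈ T, X i = 0)).card : ℝ) * (q : ℝ) ^ 2
        = if S = T then (q : ℝ) ^ (r + 1) else (q : ℝ) ^ r := by
    intro S hS T hT
    by_cases hST : S = T
    · subst hST
      simp only [if_pos rfl]
      have hfil : ((univ : Finset (Fin r → G)).filter
            (fun X => ∑ i ∈ S, X i = 0 ∧ ∑ i ∈ S, X i = 0))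
          = (univ : Finset (Fin r → G)).filter (fun X => ∑ i ∈ S, X i = 0) :=
        Finset.filter_congr (fun X _ => by tauto)
      rw [hfil]
      have h := count_one (G := G) S (hPne S hS)
      have : (((univ : Finset (Fin r → G)).filter (fun X => ∑ i ∈ S, X i = 0)).card : ℝ)
          * (q : ℝ) = (q : ℝ) ^ r := by exact_mod_cast congrArg (Nat.cast : ℕ → ℝ) h
      calc (((univ : Finset (Fin r → G)).filter (fun X => ∑ i ∈ S, X i = 0)).card : ℝ)
            * (q : ℝ) ^ 2
          = ((((univ : Finset (Fin r → G)).filter (fun X => ∑ i ∈ S, X i = 0)).card : ℝ)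
            * (q : ℝ)) * q := by ring
        _ = (q : ℝ) ^ r * q := by rw [this]
        _ = (q : ℝ) ^ (r + 1) := by ring
    · simp only [if_neg hST]
      have hScard : S.card = k := (Finset.mem_powersetCard_univ.mp hS)
      have hTcard : T.card = k := (Finset.mem_powersetCard_univ.mp hT)
      have hnsub1 : ¬ S ⊆ T := by
        intro h
        exact hST (Finset.eq_of_subset_of_card_le h (hTcard.trans hScard.symm).le)
      have hnsub2 : ¬ T ⊆ S := by
        intro h
        exact hST (Finset.eq_of_subset_of_card_le h (hScard.trans hTcard.symm).le).symm
      obtain ⟨i₀, hi₀S, hi₀T⟩ := Finset.not_subset.mp hnsub1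
      obtain ⟨j₀, hj₀T, hj₀S⟩ := Finset.not_subset.mp hnsub2
      have h := count_two (G := G) S T hi₀S hi₀T hj₀T hj₀S
      exact_mod_cast congrArg (Nat.cast : ℕ → ℝ) h
  have hSig2 : (∑ X : Fin r → G, (numSol k X : ℝ) ^ 2) * (q : ℝ) ^ 2
      = (C : ℝ) * ((C : ℝ) * (q : ℝ) ^ r + (q : ℝ) ^ (r + 1) - (q : ℝ) ^ r) := by
    have : (∑ X : Fin r → G, (numSol k X : ℝ) ^ 2)
        = ((∑ X : Fin r → G, numSol k X ^ 2 : ℕ) : ℝ) := by push_cast; rfl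
    rw [this, hswap2]
    push_cast
    rw [Finset.sum_mul]
    have : ∀ S ∈ P, (∑ T ∈ P, (((univ : Finset (Fin r → G)).filter
          (fun X => ∑ i ∈ S, X i = 0 ∧ ∑ i ∈ T, X i = 0)).card : ℝ)) * (q : ℝ) ^ 2
        = (C : ℝ) * (q : ℝ) ^ r + ((q : ℝ) ^ (r + 1) - (q : ℝ) ^ r) := by
      intro S hS
      rw [Finset.sum_mul]
      rw [Finset.sum_congr rfl (fun T hT => hcount S hS T hT)]
      have : ∀ T ∈ P, (if S = T then (q : ℝ) ^ (r + 1) else (q : ℝ) ^ r)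
          = (q : ℝ) ^ r + (if S = T then (q : ℝ) ^ (r + 1) - (q : ℝ) ^ r else 0) := by
        intro T _
        by_cases h : S = T <;> simp [h]
      rw [Finset.sum_congr rfl this, Finset.sum_add_distrib, Finset.sum_const, hPcard,
        Finset.sum_ite_eq P S (fun _ => (q : ℝ) ^ (r + 1) - (q : ℝ) ^ r), if_pos hS]
      ring
    rw [Finset.sum_congr rfl this, Finset.sum_const, hPcard]
    ring
  -- Cauchy–Schwarz
  set F : Finset (Fin r → G) := (univ : Finset (Fin r → G)).filter (fun X => 1 ≤ numSol k X)
    with hF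
  have hsum_eq : ∑ X ∈ F, (numSol k X : ℝ) = ∑ X : Fin r → G, (numSol k X : ℝ) := by
    apply Finset.sum_filter_of_ne
    intro X _ hne
    by_contra h
    push_neg at h
    interval_cases h' : numSol k X
    · simp at hne
  have hsum_sq_eq : ∑ X ∈ F, (numSol k X : ℝ) ^ 2
      = ∑ X : Fin r → G, (numSol k X : ℝ) ^ 2 := by
    apply Finset.sum_filter_of_ne
    intro X _ hne
    by_contra h
    push_neg at h
    interval_cases h' : numSol k X
    · simp at hne
  have hCS : (∑ X : Fin r → G, (numSol k X : ℝ)) ^ 2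
      ≤ (F.card : ℝ) * ∑ X : Fin r → G, (numSol k X : ℝ) ^ 2 := by
    rw [← hsum_eq, ← hsum_sq_eq]
    exact sq_sum_le_card_mul_sum_sq
  have hSig1R : (∑ X : Fin r → G, (numSol k X : ℝ)) * (q : ℝ) = (C : ℝ) * (q : ℝ) ^ r := by
    exact_mod_cast congrArg (Nat.cast : ℕ → ℝ) hSig1
  -- the key inequality: C q^r ≤ F.card (q - 1 + C)
  have hqR : (1 : ℝ) ≤ (q : ℝ) := by exact_mod_cast hq1
  have hCR : (1 : ℝ) ≤ (C : ℝ) := by exact_mod_cast hC1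
  have hqr_pos : (0 : ℝ) < (q : ℝ) ^ r := by positivity
  have hkey : (C : ℝ) * (q : ℝ) ^ r ≤ (F.card : ℝ) * ((q : ℝ) - 1 + (C : ℝ)) := by
    have h1 : ((∑ X : Fin r → G, (numSol k X : ℝ)) * (q : ℝ)) ^ 2
        ≤ (F.card : ℝ) * ((∑ X : Fin r → G, (numSol k X : ℝ) ^ 2) * (q : ℝ) ^ 2) := by
      have hq0 : (0 : ℝ) ≤ (q : ℝ) ^ 2 := by positivity
      calc ((∑ X : Fin r → G, (numSol k X : ℝ)) * (q : ℝ)) ^ 2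
          = (∑ X : Fin r → G, (numSol k X : ℝ)) ^ 2 * (q : ℝ) ^ 2 := by ring
        _ ≤ ((F.card : ℝ) * ∑ X : Fin r → G, (numSol k X : ℝ) ^ 2) * (q : ℝ) ^ 2 :=
            mul_le_mul_of_nonneg_right hCS hq0
        _ = (F.card : ℝ) * ((∑ X : Fin r → G, (numSol k X : ℝ) ^ 2) * (q : ℝ) ^ 2) := by ring
    rw [hSig1R, hSig2] at h1
    -- h1 : (C q^r)^2 ≤ F.card * (C * (C q^r + q^(r+1) - q^r))
    have hqpow : (q : ℝ) ^ (r + 1) = (q : ℝ) ^ r * (q : ℝ) := by ring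
    rw [hqpow] at h1
    have hCpos : (0 : ℝ) < (C : ℝ) := by linarith
    nlinarith [hqr_pos, hCpos, mul_pos hCpos hqr_pos]
  -- denominators
  have hden1 : (0 : ℝ) < (q : ℝ) - 1 + (C : ℝ) := by linarith
  have hden2 : (0 : ℝ) < (q : ℝ) + (C : ℝ) := by linarith
  -- card of the complement event
  have hcompl : ((univ : Finset (Fin r → G)).filter (fun X => numSol k X = 0)).card
      = q ^ r - F.card := by
    have h0 : ((univ : Finset (Fin r → G)).filter (fun X => numSol k X = 0))
        = (univ : Finset (Fin r → G)).filter (fun X => ¬ 1 ≤ numSol k X) :=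
      Finset.filter_congr (fun X _ => by rw [not_le, Nat.lt_one_iff])
    have h1 : F.card + ((univ : Finset (Fin r → G)).filter (fun X => ¬ 1 ≤ numSol k X)).card
        = (univ : Finset (Fin r → G)).card :=
      Finset.card_filter_add_card_filter_not _
    have h2 : (univ : Finset (Fin r → G)).card = q ^ r := by
      simp [Finset.card_univ, Fintype.card_fun, hq]
    rw [h0]
    rw [h2] at h1
    exact (Nat.sub_eq_of_eq_add (by rw [← h1, Nat.add_comm])).symm
  have hFle : F.card ≤ q ^ r := by
    have := Finset.card_filter_le (univ : Finset (Fin r → G)) (fun X => 1 ≤ numSol k X)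
    simpa [Finset.card_univ, Fintype.card_fun, hq] using this
  refine ⟨?_, ?_, ?_⟩
  · -- part 1
    unfold D0probPred
    rw [div_le_div_iff₀ hden1 hqr_pos]
    calc (C : ℝ) * (q : ℝ) ^ r ≤ (F.card : ℝ) * ((q : ℝ) - 1 + (C : ℝ)) := hkey
      _ = _ := by rw [hF]
  · -- part 2
    unfold D0probPred
    rw [div_le_div_iff₀ hqr_pos hden1]
    have hcomplR : ((((univ : Finset (Fin r → G)).filter (fun X => numSol k X = 0)).card : ℝ))
        = (q : ℝ) ^ r - (F.card : ℝ) := by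
      rw [hcompl]
      have : ((q ^ r - F.card : ℕ) : ℝ) = ((q ^ r : ℕ) : ℝ) - (F.card : ℝ) := by
        rw [Nat.cast_sub hFle]
      rw [this]; push_cast; ring
    rw [hcomplR]
    nlinarith [hkey]
  · -- part 3
    rw [div_lt_div_iff₀ hden1 hden2]
    nlinarith
end

section
/- Let G be a finite abelian group and 1 ≤ k ≤ r. For X drawn from the planted distribution D1 on G^r, the expected number of k-SUM solutions satisfies E[c(X)] = 1 + (C(r,k) − 1)/|G|. -/
open Finset

/-- Expectation of the number of k-SUM solutions under the planted distribution `D1`. -/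
noncomputable def expD1 (G : Type) [AddCommGroup G] [Fintype G] [DecidableEq G]
    (k r : ℕ) : ℝ :=
  ∑ X : Fin r → G, D1pmf k X * (numSol k X : ℝ)


section Helpers
set_option linter.unusedSectionVars false

variable {G : Type} [AddCommGroup G] [Fintype G] [DecidableEq G]

lemma card_coord_zero {r : ℕ} (j : Fin r) :
    (univ.filter (fun Y : Fin r → G => Y j = 0)).card = Fintype.card G ^ (r - 1) := by
  have : (univ.filter (fun Y : Fin r → G => Y j = 0)) =
      Fintype.piFinset (fun i => if i = j then ({0} : Finset G) else univ) := by
    ext Y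
    simp only [mem_filter, mem_univ, true_and, Fintype.mem_piFinset]
    constructor
    · intro h i; split <;> simp_all
    · intro h; have := h j; simpa using this
  rw [this, Fintype.card_piFinset]
  rw [← Finset.mul_prod_erase univ _ (mem_univ j)]
  simp only [if_pos rfl, Finset.card_singleton, one_mul]
  have : ∀ i ∈ univ.erase j, ((if i = j then ({0} : Finset G) else univ)).card = Fintype.card G := by
    intro i hi
    rw [if_neg (Finset.mem_erase.mp hi).1]
    simp
  rw [Finset.prod_congr rfl this, Finset.prod_const, Finset.card_erase_of_mem (mem_univ j),
    Finset.card_univ, Fintype.card_fin]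
  simp

lemma card_shifted {r : ℕ} (j : Fin r) (h : (Fin r → G) → G)
    (hh : ∀ Y a, h (Function.update Y j a) = h Y) :
    (univ.filter (fun Y : Fin r → G => Y j + h Y = 0)).card = Fintype.card G ^ (r - 1) := by
  rw [← card_coord_zero (G := G) j]
  apply Finset.card_nbij' (fun Y => Function.update Y j 0)
      (fun Z => Function.update Z j (-(h Z)))
  · intro Y hY; simp
  · intro Z hZ
    simp only [coe_filter, mem_coe, mem_filter, mem_univ, true_and, Set.mem_setOf_eq] at *
    rw [Function.update_self, hh]
    abel
  · intro Y hY
    simp only [coe_filter, mem_coe, mem_filter, mem_univ, true_and, Set.mem_setOf_eq] at hY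
    dsimp only
    rw [hh, Function.update_idem]
    have : -(h Y) = Y j := by linear_combination (norm := abel) -hY
    rw [this, Function.update_eq_self]
  · intro Z hZ
    simp only [coe_filter, mem_coe, mem_filter, mem_univ, true_and, Set.mem_setOf_eq] at hZ
    dsimp only
    rw [Function.update_idem, ← hZ, Function.update_eq_self]

lemma plant_apply_of_not_mem {r : ℕ} (Y : Fin r → G) (S : Finset (Fin r)) {j : Fin r}
    (hj : j ∉ S) : plant Y S j = Y j := by
  unfold plant
  split
  · next hS =>
    rw [if_neg]
    intro hjm
    exact hj (hjm ▸ S.min'_mem hS)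
  · rfl

lemma sum_plant_self {r : ℕ} (Y : Fin r → G) (S : Finset (Fin r)) (hS : S.Nonempty) :
    ∑ i ∈ S, plant Y S i = 0 := by
  set m := S.min' hS with hm
  rw [← Finset.add_sum_erase _ _ (S.min'_mem hS)]
  have h1 : plant Y S m = -∑ i ∈ S.erase m, Y i := by
    unfold plant; rw [dif_pos hS, if_pos rfl]
  have h2 : ∑ i ∈ S.erase m, plant Y S i = ∑ i ∈ S.erase m, Y i := by
    apply Finset.sum_congr rfl
    intro i hi
    unfold plant
    rw [dif_pos hS, if_neg (Finset.mem_erase.mp hi).1]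
  rw [h1, h2, neg_add_cancel]

lemma plant_update_of_not_mem {r : ℕ} (Y : Fin r → G) (S : Finset (Fin r)) {j i : Fin r}
    (hj : j ∉ S) (hij : i ≠ j) (a : G) :
    plant (Function.update Y j a) S i = plant Y S i := by
  unfold plant
  split
  · next hS =>
    by_cases him : i = S.min' hS
    · rw [if_pos him, if_pos him]
      congr 1
      apply Finset.sum_congr rfl
      intro x hx
      apply Function.update_of_ne
      intro hxj
      exact hj (hxj ▸ Finset.mem_of_mem_erase hx)
    · rw [if_neg him, if_neg him, Function.update_of_ne hij]
  · exact Function.update_of_ne hij a Y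

lemma count_T {r k : ℕ} (hk : 1 ≤ k) (S T : Finset (Fin r)) (hS : S.card = k) (hT : T.card = k) :
    (univ.filter (fun Y : Fin r → G => ∑ i ∈ T, plant Y S i = 0)).card
      = if T = S then Fintype.card G ^ r else Fintype.card G ^ (r - 1) := by
  split
  · next hTS =>
    subst hTS
    have hne : T.Nonempty := Finset.card_pos.mp (hS ▸ hk)
    rw [Finset.filter_true_of_mem (fun Y _ => sum_plant_self Y T hne)]
    rw [Finset.card_univ, Fintype.card_fun, Fintype.card_fin]
  · next hTS =>
    obtain ⟨j, hjT, hjS⟩ : ∃ j ∈ T, j ∉ S := by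
      by_contra hc
      push_neg at hc
      exact hTS (Finset.eq_of_subset_of_card_le hc (le_of_eq (hS.trans hT.symm)))
    have key : ∀ Y : Fin r → G, ∑ i ∈ T, plant Y S i
        = Y j + ∑ i ∈ T.erase j, plant Y S i := by
      intro Y
      rw [← Finset.add_sum_erase _ _ hjT, plant_apply_of_not_mem Y S hjS]
    rw [Finset.filter_congr (fun Y _ => by rw [key Y])]
    apply card_shifted j (fun Y => ∑ i ∈ T.erase j, plant Y S i)
    intro Y a
    apply Finset.sum_congr rfl
    intro i hi
    exact plant_update_of_not_mem Y S hjS (Finset.mem_erase.mp hi).1 a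

lemma sum_numSol_plant {r k : ℕ} (hk : 1 ≤ k) (S : Finset (Fin r)) (hS : S.card = k) :
    ∑ Y : Fin r → G, numSol k (plant Y S)
      = Fintype.card G ^ r + (r.choose k - 1) * Fintype.card G ^ (r - 1) := by
  have h1 : ∀ Y : Fin r → G, numSol k (plant Y S)
      = ∑ T ∈ (univ : Finset (Fin r)).powersetCard k,
          if ∑ i ∈ T, plant Y S i = 0 then 1 else 0 := by
    intro Y; rw [numSol, Finset.card_filter]
  simp only [h1]
  rw [Finset.sum_comm]
  have h2 : ∀ T ∈ (univ : Finset (Fin r)).powersetCard k,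
      (∑ Y : Fin r → G, if ∑ i ∈ T, plant Y S i = 0 then 1 else 0)
        = if T = S then Fintype.card G ^ r else Fintype.card G ^ (r - 1) := by
    intro T hT
    rw [← Finset.card_filter]
    exact count_T hk S T hS (Finset.mem_powersetCard_univ.mp hT)
  rw [Finset.sum_congr rfl h2]
  have hSmem : S ∈ (univ : Finset (Fin r)).powersetCard k :=
    Finset.mem_powersetCard_univ.mpr hS
  rw [← Finset.add_sum_erase _ _ hSmem, if_pos rfl]
  congr 1
  have h3 : ∀ T ∈ ((univ : Finset (Fin r)).powersetCard k).erase S,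
      (if T = S then Fintype.card G ^ r else Fintype.card G ^ (r - 1))
        = Fintype.card G ^ (r - 1) := by
    intro T hT; rw [if_neg (Finset.mem_erase.mp hT).1]
  rw [Finset.sum_congr rfl h3, Finset.sum_const, smul_eq_mul,
    Finset.card_erase_of_mem hSmem, Finset.card_powersetCard, Finset.card_univ,
    Fintype.card_fin]

lemma total_sum {r k : ℕ} (hk : 1 ≤ k) :
    ∑ p ∈ (univ : Finset ((Fin r → G) × Finset (Fin r))).filter (fun p => p.2.card = k),
        numSol k (plant p.1 p.2)
      = r.choose k * (Fintype.card G ^ r + (r.choose k - 1) * Fintype.card G ^ (r - 1)) := by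
  rw [Finset.sum_filter, Fintype.sum_prod_type_right]
  have h1 : ∀ S : Finset (Fin r),
      (∑ Y : Fin r → G, if S.card = k then numSol k (plant Y S) else 0)
        = if S.card = k then
            Fintype.card G ^ r + (r.choose k - 1) * Fintype.card G ^ (r - 1) else 0 := by
    intro S
    by_cases hS : S.card = k
    · simp only [if_pos hS]; exact sum_numSol_plant hk S hS
    · simp [hS]
  rw [Finset.sum_congr rfl (fun S _ => h1 S), ← Finset.sum_filter]
  have : (univ : Finset (Finset (Fin r))).filter (fun S => S.card = k)
      = (univ : Finset (Fin r)).powersetCard k := by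
    ext S; simp [Finset.mem_powersetCard_univ]
  rw [Finset.sum_const, this, smul_eq_mul, Finset.card_powersetCard, Finset.card_univ,
    Fintype.card_fin]

lemma fiber_sum {r k : ℕ} :
    (∑ X : Fin r → G,
      ((univ : Finset ((Fin r → G) × Finset (Fin r))).filter
          (fun p => p.2.card = k ∧ plant p.1 p.2 = X)).card * numSol k X)
    = ∑ p ∈ (univ : Finset ((Fin r → G) × Finset (Fin r))).filter (fun p => p.2.card = k),
        numSol k (plant p.1 p.2) := by
  rw [← Finset.sum_fiberwise_of_maps_to
      (g := fun p : (Fin r → G) × Finset (Fin r) => plant p.1 p.2)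
      (fun p _ => Finset.mem_univ _)
      (fun p => numSol k (plant p.1 p.2))]
  apply Finset.sum_congr rfl
  intro X _
  rw [Finset.filter_filter]
  rw [Finset.sum_congr rfl (fun p hp => by
    rw [(Finset.mem_filter.mp hp).2.2])]
  rw [Finset.sum_const, smul_eq_mul]


end Helpers

/-- **Expected number of solutions under the planted distribution.**
For `X ∼ D1`, `E[c(X)] = 1 + (C(r,k) − 1)/|G|`. -/
theorem numSol_expectation_planted
    (G : Type) [AddCommGroup G] [Fintype G] [DecidableEq G]
    (k r : ℕ) (hk : 1 ≤ k) (hkr : k ≤ r) :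
    expD1 G k r = 1 + ((r.choose k : ℝ) - 1) / (Fintype.card G : ℝ) := by
  unfold expD1 D1pmf
  have hg : 0 < Fintype.card G := Fintype.card_pos
  have hc : 0 < r.choose k := Nat.choose_pos hkr
  have hr : 1 ≤ r := hk.trans hkr
  simp only [div_mul_eq_mul_div]
  rw [← Finset.sum_div]
  have hnat : (∑ X : Fin r → G,
      (((univ : Finset ((Fin r → G) × Finset (Fin r))).filter
        (fun p => p.2.card = k ∧ plant p.1 p.2 = X)).card : ℝ) * (numSol k X : ℝ))
      = ((r.choose k * (Fintype.card G ^ r + (r.choose k - 1) * Fintype.card G ^ (r - 1)) : ℕ) : ℝ) := by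
    have h := (fiber_sum (G := G) (r := r) (k := k)).trans (total_sum (G := G) hk)
    exact_mod_cast congrArg (fun n : ℕ => (n : ℝ)) h
  rw [hnat]
  have hcast : ((r.choose k * (Fintype.card G ^ r + (r.choose k - 1) * Fintype.card G ^ (r - 1)) : ℕ) : ℝ)
      = (r.choose k : ℝ) * ((Fintype.card G : ℝ) ^ r
        + ((r.choose k : ℝ) - 1) * (Fintype.card G : ℝ) ^ (r - 1)) := by
    push_cast [Nat.cast_sub hc]
    ring
  rw [hcast]
  have hpow : (Fintype.card G : ℝ) ^ r = (Fintype.card G : ℝ) ^ (r - 1) * (Fintype.card G : ℝ) := by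
    rw [← pow_succ, Nat.sub_add_cancel hr]
  rw [hpow]
  have hg0 : (Fintype.card G : ℝ) ≠ 0 := Nat.cast_ne_zero.mpr hg.ne'
  have hc0 : (r.choose k : ℝ) ≠ 0 := Nat.cast_ne_zero.mpr hc.ne'
  have hp0 : (Fintype.card G : ℝ) ^ (r - 1) ≠ 0 := pow_ne_zero _ hg0
  field_simp
end

section
/- Let G be a finite abelian group and 1 ≤ k ≤ r. For every instance X ∈ G^r, the probability mass of the planted distribution satisfies D1({X}) = (|G|·c(X)/C(r,k))·D0({X}), i.e., D1({X}) = c(X)/(C(r,k)·|G|^{r−1}). -/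
open Finset

/-- The probability mass function of the uniform distribution `D0` on `G^r`. -/
noncomputable def D0pmf (G : Type) [Fintype G] (r : ℕ) (_X : Fin r → G) : ℝ :=
  1 / (Fintype.card G : ℝ) ^ r

section Aux

variable {G : Type} [AddCommGroup G] [Fintype G] [DecidableEq G] {r : ℕ}

omit [Fintype G] [DecidableEq G] in
lemma plant_iff (S : Finset (Fin r)) (hS : S.Nonempty) (X Y : Fin r → G) :
    plant Y S = X ↔ ((∀ j, j ≠ S.min' hS → Y j = X j) ∧ ∑ i ∈ S, X i = 0) := by
  set m := S.min' hS with hm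
  have hmm : m ∈ S := S.min'_mem hS
  constructor
  · intro h
    have h' : ∀ j, plant Y S j = X j := fun j => congrFun h j
    have hoff : ∀ j, j ≠ m → Y j = X j := by
      intro j hj
      have := h' j
      simpa [plant, hS, ← hm, hj] using this
    refine ⟨hoff, ?_⟩
    have hmem : -∑ i ∈ S.erase m, Y i = X m := by
      have := h' m
      simpa [plant, hS, ← hm] using this
    have hsum : ∑ i ∈ S.erase m, Y i = ∑ i ∈ S.erase m, X i :=
      Finset.sum_congr rfl (fun i hi => hoff i (Finset.ne_of_mem_erase hi))
    rw [hsum] at hmem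
    have hins : ∑ i ∈ S, X i = X m + ∑ i ∈ S.erase m, X i :=
      (Finset.add_sum_erase S X hmm).symm
    rw [hins, ← hmem]; abel
  · rintro ⟨hoff, hsum⟩
    have hsum' : ∀ (Z : Fin r → G), (∀ j, j ≠ m → Z j = X j) →
        ∑ i ∈ S.erase m, Z i = ∑ i ∈ S.erase m, X i := fun Z hZ =>
      Finset.sum_congr rfl (fun i hi => hZ i (Finset.ne_of_mem_erase hi))
    have hXm : -∑ i ∈ S.erase m, X i = X m := by
      have hins : ∑ i ∈ S, X i = X m + ∑ i ∈ S.erase m, X i :=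
        (Finset.add_sum_erase S X hmm).symm
      rw [hins] at hsum
      have : X m = -∑ i ∈ S.erase m, X i := by
        rw [eq_neg_iff_add_eq_zero]; exact hsum
      exact this.symm
    funext j
    by_cases hj : j = m
    · subst hj
      simp [plant, hS, ← hm, hsum' Y hoff, hXm]
    · simp [plant, hS, ← hm, hj, hoff j hj]

lemma inner_count (S : Finset (Fin r)) (hS : S.Nonempty) (X : Fin r → G) :
    (univ.filter (fun Y : Fin r → G => plant Y S = X)).card =
      if ∑ i ∈ S, X i = 0 then Fintype.card G else 0 := by
  set m := S.min' hS with hm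
  by_cases hsum : ∑ i ∈ S, X i = 0
  · rw [if_pos hsum]
    rw [← Finset.card_univ (α := G)]
    apply Finset.card_nbij' (fun Y => Y m) (fun g => Function.update X m g)
    · intro Y hY; simp
    · intro g hg
      simp only [mem_coe, mem_filter, mem_univ, true_and]
      rw [plant_iff S hS]
      exact ⟨fun j hj => Function.update_of_ne hj _ _, hsum⟩
    · intro Y hY
      simp only [mem_coe, mem_filter, mem_univ, true_and] at hY
      rw [plant_iff S hS] at hY
      funext j
      by_cases hj : j = m
      · subst hj; simp
      · beta_reduce; rw [Function.update_of_ne hj]; exact (hY.1 j hj).symm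
    · intro g hg; simp
  · rw [if_neg hsum]
    rw [Finset.card_eq_zero, Finset.filter_eq_empty_iff]
    intro Y _
    rw [plant_iff S hS]
    exact fun h => hsum h.2

lemma main_count (k : ℕ) (hk : 1 ≤ k) (X : Fin r → G) :
    ((univ : Finset ((Fin r → G) × Finset (Fin r))).filter
      (fun p => p.2.card = k ∧ plant p.1 p.2 = X)).card =
      Fintype.card G * numSol k X := by
  rw [numSol, Finset.card_filter, Fintype.sum_prod_type_right]
  have hinner : ∀ S : Finset (Fin r),
      (∑ Y : Fin r → G, if S.card = k ∧ plant Y S = X then 1 else 0) =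
      (if S ∈ ((univ : Finset (Fin r)).powersetCard k).filter
          (fun S => ∑ i ∈ S, X i = 0) then Fintype.card G else 0) := by
    intro S
    by_cases hcard : S.card = k
    · have hS : S.Nonempty := Finset.card_pos.mp (by omega)
      have h1 : (∑ Y : Fin r → G, if S.card = k ∧ plant Y S = X then 1 else 0) =
          (univ.filter (fun Y : Fin r → G => plant Y S = X)).card := by
        rw [Finset.card_filter]
        exact Finset.sum_congr rfl (fun Y _ => by simp [hcard])
      rw [h1, inner_count S hS X]
      simp [Finset.mem_filter, Finset.mem_powersetCard_univ, hcard]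
    · simp [hcard, Finset.mem_filter, Finset.mem_powersetCard_univ]
  rw [Finset.sum_congr rfl (fun S _ => hinner S)]
  rw [Finset.sum_ite_mem, Finset.univ_inter, Finset.sum_const, smul_eq_mul, mul_comm]

end Aux

/-- **Explicit pmf of the planted distribution.**
For every instance `X ∈ G^r`,
`D1({X}) = (|G|·c(X)/C(r,k))·D0({X})`, i.e. `D1({X}) = c(X)/(C(r,k)·|G|^{r−1})`. -/
theorem D1pmf_explicit
    (G : Type) [AddCommGroup G] [Fintype G] [DecidableEq G]
    (k r : ℕ) (hk : 1 ≤ k) (hkr : k ≤ r) (X : Fin r → G) :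
    D1pmf k X
        = ((Fintype.card G : ℝ) * (numSol k X : ℝ) / (r.choose k : ℝ)) * D0pmf G r X
    ∧ D1pmf k X
        = (numSol k X : ℝ) / ((r.choose k : ℝ) * (Fintype.card G : ℝ) ^ (r - 1)) := by
  have hG : (0 : ℝ) < (Fintype.card G : ℝ) := by
    exact_mod_cast Fintype.card_pos
  have hch : (0 : ℝ) < (r.choose k : ℝ) := by
    exact_mod_cast Nat.choose_pos hkr
  have hr : 1 ≤ r := le_trans hk hkr
  have hpow : (Fintype.card G : ℝ) ^ r =
      (Fintype.card G : ℝ) * (Fintype.card G : ℝ) ^ (r - 1) := by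
    rw [← pow_succ']
    congr 1
    omega
  have hD1 : D1pmf k X = (Fintype.card G : ℝ) * (numSol k X : ℝ)
      / ((Fintype.card G : ℝ) ^ r * (r.choose k : ℝ)) := by
    rw [D1pmf, main_count k hk X]
    push_cast
    ring
  constructor
  · rw [hD1, D0pmf]
    field_simp
  · rw [hD1, hpow]
    have hGpow : (Fintype.card G : ℝ) ^ (r - 1) ≠ 0 := by positivity
    field_simp
end

section
/- Let G be a finite abelian group, 1 ≤ k ≤ r, and ℓ ≥ 0. For every instance X ∈ G^r, D^ℓ({X}) ≤ ( ℓ·|G|/C(r,k) + Pr_{Y∼D1}[c(Y) > ℓ] ) · D0({X}); consequently, for every event E ⊆ G^r, D0(E) ≥ D^ℓ(E) / ( ℓ·|G|/C(r,k) + Pr_{Y∼D1}[c(Y) > ℓ] ). -/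
open Finset

lemma plant_eq_iff {G : Type} [AddCommGroup G] {r : ℕ} (Y X : Fin r → G)
    (S : Finset (Fin r)) (h : S.Nonempty) :
    plant Y S = X ↔ ((∀ j, j ≠ S.min' h → Y j = X j) ∧ ∑ i ∈ S, X i = 0) := by
  constructor
  · rintro rfl
    refine ⟨fun j hj => by simp [plant, h, hj], ?_⟩
    rw [← Finset.add_sum_erase _ _ (S.min'_mem h)]
    have he : ∀ i ∈ S.erase (S.min' h), plant Y S i = Y i := by
      intro i hi
      simp [plant, h, Finset.ne_of_mem_erase hi]
    rw [Finset.sum_congr rfl he]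
    simp [plant, h]
  · rintro ⟨h1, h2⟩
    funext j
    by_cases hj : j = S.min' h
    · subst hj
      simp only [plant]
      rw [dif_pos h]; simp only [if_true]
      have he : ∑ i ∈ S.erase (S.min' h), Y i = ∑ i ∈ S.erase (S.min' h), X i :=
        Finset.sum_congr rfl fun i hi => h1 i (Finset.ne_of_mem_erase hi)
      rw [he, neg_eq_iff_add_eq_zero, add_comm, Finset.add_sum_erase _ _ (S.min'_mem h), h2]
    · simpa [plant, h, hj] using h1 j hj

lemma card_plant {G : Type} [AddCommGroup G] [Fintype G] [DecidableEq G] {k r : ℕ}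
    (hk : 1 ≤ k) (X : Fin r → G) :
    ((univ : Finset ((Fin r → G) × Finset (Fin r))).filter
      (fun p => p.2.card = k ∧ plant p.1 p.2 = X)).card
      = numSol k X * Fintype.card G := by
  rw [numSol, ← Finset.card_univ (α := G), ← Finset.card_product]
  apply Finset.card_nbij'
    (i := fun p => (p.2, if h : p.2.Nonempty then p.1 (p.2.min' h) else 0))
    (j := fun q => ((if h : q.1.Nonempty then Function.update X (q.1.min' h) q.2 else X), q.1))
  · intro p hp
    simp only [Finset.mem_coe, Finset.mem_filter, Finset.mem_univ, true_and] at hp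
    obtain ⟨hcard, hpl⟩ := hp
    have hne : p.2.Nonempty := Finset.card_pos.mp (by omega)
    rw [plant_eq_iff _ _ _ hne] at hpl
    simp [Finset.mem_product, Finset.mem_powersetCard, hcard, hpl.2]
  · intro q hq
    simp only [Finset.mem_coe, Finset.mem_product, Finset.mem_powersetCard, Finset.mem_univ, true_and,
      Finset.mem_filter] at hq
    obtain ⟨⟨⟨-, hcard⟩, hsum⟩, -⟩ := hq
    have hne : q.1.Nonempty := Finset.card_pos.mp (by omega)
    simp only [Finset.mem_coe, Finset.mem_filter, Finset.mem_univ, true_and, dif_pos hne]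
    refine ⟨hcard, (plant_eq_iff _ _ _ hne).mpr ⟨fun j hj => Function.update_of_ne hj _ _, hsum⟩⟩
  · intro p hp
    simp only [Finset.mem_coe, Finset.mem_filter, Finset.mem_univ, true_and] at hp
    obtain ⟨hcard, hpl⟩ := hp
    have hne : p.2.Nonempty := Finset.card_pos.mp (by omega)
    rw [plant_eq_iff _ _ _ hne] at hpl
    simp only [dif_pos hne]
    ext1
    · funext j
      by_cases hj : j = p.2.min' hne
      · subst hj; simp
      · simp [Function.update_of_ne hj, hpl.1 j hj]
    · rfl
  · intro q hq
    simp only [Finset.mem_coe, Finset.mem_product, Finset.mem_powersetCard, Finset.mem_univ, true_and,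
      Finset.mem_filter] at hq
    obtain ⟨⟨⟨-, hcard⟩, -⟩, -⟩ := hq
    have hne : q.1.Nonempty := Finset.card_pos.mp (by omega)
    simp [dif_pos hne]

/-- `Pr_{Y∼D1}[c(Y) > ℓ]`: the probability under the planted distribution that
the number of solutions exceeds the real threshold `ℓ`. -/
noncomputable def D1probGt (G : Type) [AddCommGroup G] [Fintype G] [DecidableEq G]
    (k r : ℕ) (ℓ : ℝ) : ℝ :=
  ∑ X ∈ (univ : Finset (Fin r → G)).filter (fun X => ℓ < (numSol k X : ℝ)), D1pmf k X

/-- The probability mass function of the hybrid distribution `D^ℓ` on `G^r`: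
draw `X` from `D1`; if `c(X) ≤ ℓ` output `X`, otherwise output an independent
uniform sample from `G^r`. -/
noncomputable def Dhybpmf (G : Type) [AddCommGroup G] [Fintype G] [DecidableEq G]
    (k r : ℕ) (ℓ : ℝ) (X : Fin r → G) : ℝ :=
  (if (numSol k X : ℝ) ≤ ℓ then D1pmf k X else 0) + D1probGt G k r ℓ * D0pmf G r X

/-- Probability of an event `E` under the hybrid distribution `D^ℓ`. -/
noncomputable def Dhybprob (G : Type) [AddCommGroup G] [Fintype G] [DecidableEq G]
    (k : ℕ) {r : ℕ} (ℓ : ℝ) (E : Finset (Fin r → G)) : ℝ :=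
  ∑ X ∈ E, Dhybpmf G k r ℓ X

lemma D1pmf_nonneg {G : Type} [AddCommGroup G] [Fintype G] [DecidableEq G] (k : ℕ)
    {r : ℕ} (X : Fin r → G) : 0 ≤ D1pmf k X := by
  apply div_nonneg (by positivity) (by positivity)

lemma D1probGt_nonneg (G : Type) [AddCommGroup G] [Fintype G] [DecidableEq G]
    (k r : ℕ) (ℓ : ℝ) : 0 ≤ D1probGt G k r ℓ :=
  Finset.sum_nonneg fun X _ => D1pmf_nonneg k X

/-- **Rényi-divergence bound between `D^ℓ` and `D0`.**
For every `X ∈ G^r`, `D^ℓ({X}) ≤ (ℓ·|G|/C(r,k) + Pr_{Y∼D1}[c(Y) > ℓ])·D0({X})`;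
consequently, for every event `E ⊆ G^r`,
`D0(E) ≥ D^ℓ(E) / (ℓ·|G|/C(r,k) + Pr_{Y∼D1}[c(Y) > ℓ])`. -/
theorem Dhyb_renyi_bound
    (G : Type) [AddCommGroup G] [Fintype G] [DecidableEq G]
    (k r : ℕ) (hk : 1 ≤ k) (hkr : k ≤ r) (ℓ : ℝ) (hℓ : 0 ≤ ℓ) :
    (∀ X : Fin r → G,
        Dhybpmf G k r ℓ X
          ≤ (ℓ * (Fintype.card G : ℝ) / (r.choose k : ℝ) + D1probGt G k r ℓ)
              * D0pmf G r X)
    ∧ (∀ E : Finset (Fin r → G),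
        Dhybprob G k ℓ E
            / (ℓ * (Fintype.card G : ℝ) / (r.choose k : ℝ) + D1probGt G k r ℓ)
          ≤ D0prob G E) := by
  have hG : (0 : ℝ) < (Fintype.card G : ℝ) := by
    exact_mod_cast Fintype.card_pos
  have hGr : (0 : ℝ) < (Fintype.card G : ℝ) ^ r := by positivity
  have hC : (0 : ℝ) < (r.choose k : ℝ) := by
    exact_mod_cast Nat.choose_pos hkr
  set K : ℝ := ℓ * (Fintype.card G : ℝ) / (r.choose k : ℝ) + D1probGt G k r ℓ with hK
  have hK0 : 0 ≤ K := by
    apply add_nonneg (div_nonneg (mul_nonneg hℓ hG.le) hC.le) (D1probGt_nonneg G k r ℓ)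
  have main : ∀ X : Fin r → G, Dhybpmf G k r ℓ X ≤ K * D0pmf G r X := by
    intro X
    rw [Dhybpmf, hK, add_mul]
    apply add_le_add _ le_rfl
    split_ifs with h
    · rw [D1pmf, card_plant hk X, D0pmf, mul_one_div, div_div,
        mul_comm ((r.choose k : ℝ)) ((Fintype.card G : ℝ) ^ r), mul_comm ((Fintype.card G : ℝ) ^ r)]
      push_cast
      rw [div_le_div_iff₀ (by positivity) (by positivity)]
      have hpos : (0:ℝ) ≤ (r.choose k : ℝ) * (Fintype.card G : ℝ) ^ r := by positivity
      exact mul_le_mul_of_nonneg_right (mul_le_mul_of_nonneg_right h hG.le) hpos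
    · have h1 : (0:ℝ) ≤ 1 / (Fintype.card G : ℝ) ^ r := by positivity
      exact mul_nonneg (div_nonneg (mul_nonneg hℓ hG.le) hC.le) h1
  refine ⟨main, fun E => ?_⟩
  have hsum : Dhybprob G k ℓ E ≤ K * D0prob G E := by
    rw [Dhybprob, D0prob]
    calc ∑ X ∈ E, Dhybpmf G k r ℓ X ≤ ∑ X ∈ E, K * D0pmf G r X :=
          Finset.sum_le_sum fun X _ => main X
      _ = K * ((E.card : ℝ) / (Fintype.card G : ℝ) ^ r) := by
          simp only [D0pmf, Finset.sum_const, nsmul_eq_mul]; ring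
  rcases eq_or_lt_of_le hK0 with h0 | h0
  · rw [← h0, div_zero]
    exact div_nonneg (by positivity) hGr.le
  · rw [div_le_iff₀ h0]
    rw [mul_comm] at hsum
    exact hsum
end
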